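/- arXiv:cs/9812022 — 8 statements merged into one kernel-verified Lean document; each statement's English description precedes it below -/
import Mathlib

section
/- For each m > 0 and k > 0 there exists a strict (m,k)-3-partitioning-system, i.e., a family Σ of at least m pairwise class-disjoint 3-partitions of some finite base set S such that every class has at least k elements, and for all classes S', S'', S''' ∈ classes(Σ), either {S',S'',S'''} is one of the 3-partitions in Σ or S' ∪ S'' ∪ S''' is a proper subset of S. Moreover such a system exists with |S| ≤ 27m³ + 2m + 3k. -/
/-- `σ` is a 3-partition of the finite set `S`: a set of three nonempty
pairwise disjoint subsets of `S` whose union is `S`. -/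
def ThreePartition {α : Type*} [DecidableEq α] (S : Finset α) (σ : Finset (Finset α)) : Prop :=
  σ.card = 3 ∧ (∀ c ∈ σ, c.Nonempty) ∧ σ.biUnion id = S ∧
    ∀ c ∈ σ, ∀ d ∈ σ, c ≠ d → Disjoint c d

namespace Stmt1Aux
open Finset

noncomputable instance myEnc (m : ℕ) : Encodable (Fin m → Fin 3) := Fintype.toEncodable _

abbrev A (m : ℕ) := ℕ × (Fin m → Fin 3)
abbrev Idx (m : ℕ) := (Fin m × Fin 3) × (Fin m × Fin 3) × (Fin m × Fin 3)

variable (m k : ℕ)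

/-- forbidden values at coordinate c for a triple of constraints -/
def forb (τ : Idx m) (c : Fin m) : Finset (Fin 3) :=
  (if τ.1.1 = c then {τ.1.2} else ∅) ∪ (if τ.2.1.1 = c then {τ.2.1.2} else ∅) ∪
    (if τ.2.2.1 = c then {τ.2.2.2} else ∅)

/-- witness function for a triple -/
noncomputable def w (τ : Idx m) (c : Fin m) : Fin 3 :=
  if h : (Finset.univ \ forb m τ c).Nonempty then h.choose else 0

lemma w_spec (τ : Idx m) (c : Fin m) (h : forb m τ c ≠ Finset.univ) :
    w m τ c ∉ forb m τ c := by
  have hne : (Finset.univ \ forb m τ c).Nonempty := by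
    rw [sdiff_nonempty]
    intro hsub
    exact h (Finset.univ_subset_iff.mp hsub)
  rw [w, dif_pos hne]
  have := hne.choose_spec
  simp only [mem_sdiff] at this
  exact this.2

noncomputable def pad : Finset (A m) :=
  ((Finset.range k) ×ˢ (Finset.univ : Finset (Fin 3))).image (fun p => (p.1, fun _ => p.2))

noncomputable def wit : Finset (A m) :=
  (Finset.univ : Finset (Idx m)).image (fun τ => (k, w m τ))

noncomputable def T : Finset (A m) := pad m k ∪ wit m k

noncomputable def S : Finset ℕ := (T m k).image Encodable.encode

noncomputable def φ (n : ℕ) : Fin m → Fin 3 :=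
  ((Encodable.decode (α := A m) n).map Prod.snd).getD (fun _ => 0)

lemma φ_enc (a : A m) : φ m (Encodable.encode a) = a.2 := by
  simp [φ, Encodable.encodek]

noncomputable def C (i : Fin m) (t : Fin 3) : Finset ℕ :=
  (S m k).filter (fun n => φ m n i = t)

lemma mem_C_enc (a : A m) (ha : a ∈ T m k) (i : Fin m) (t : Fin 3) :
    Encodable.encode a ∈ C m k i t ↔ a.2 i = t := by
  have hS : Encodable.encode a ∈ S m k := mem_image_of_mem _ ha
  simp [C, mem_filter, hS, φ_enc]

lemma C_subset (i : Fin m) (t : Fin 3) : C m k i t ⊆ S m k := filter_subset _ _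

lemma const_mem_T (s : ℕ) (hs : s < k) (t : Fin 3) : ((s, fun _ => t) : A m) ∈ T m k := by
  refine mem_union_left _ ?_
  simp only [pad, mem_image, mem_product, mem_range]
  exact ⟨(s, t), ⟨hs, mem_univ _⟩, rfl⟩

lemma card_C (i : Fin m) (t : Fin 3) : k ≤ (C m k i t).card := by
  have : (Finset.range k).card ≤ (C m k i t).card := by
    apply Finset.card_le_card_of_injOn (fun s => Encodable.encode ((s, fun _ => t) : A m))
    · intro s hs
      show Encodable.encode ((s, fun _ => t) : A m) ∈ C m k i t
      rw [mem_C_enc m k _ (const_mem_T m k s (mem_range.mp (Finset.mem_coe.mp hs)) t)]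
    · intro s _ s' _ h
      have := Encodable.encode_injective h
      exact (Prod.mk.injEq _ _ _ _ ▸ this).1
  simpa using this

lemma C_nonempty (hk : 0 < k) (i : Fin m) (t : Fin 3) : (C m k i t).Nonempty :=
  Finset.card_pos.mp (lt_of_lt_of_le hk (card_C m k i t))

lemma C_disjoint (i : Fin m) {t t' : Fin 3} (h : t ≠ t') : Disjoint (C m k i t) (C m k i t') := by
  rw [Finset.disjoint_left]
  intro n hn hn'
  simp only [C, mem_filter] at hn hn'
  exact h (hn.2 ▸ hn'.2 ▸ rfl)

lemma C_ne (hk : 0 < k) (i : Fin m) {t t' : Fin 3} (h : t ≠ t') : C m k i t ≠ C m k i t' := by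
  intro heq
  have := C_disjoint m k i h
  rw [heq, disjoint_self] at this
  exact (C_nonempty m k hk i t').ne_empty (heq ▸ this)

noncomputable def σf (i : Fin m) : Finset (Finset ℕ) := {C m k i 0, C m k i 1, C m k i 2}

noncomputable def F : Finset (Finset (Finset ℕ)) := Finset.univ.image (σf m k)

/-- witness element for a bad triple -/
lemma witness (τ : Idx m) (hbad : ∀ c, forb m τ c ≠ Finset.univ) :
    ∃ n ∈ S m k, ∀ c t, t ∈ forb m τ c → n ∉ C m k c t := by
  refine ⟨Encodable.encode ((k, w m τ) : A m), ?_, ?_⟩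
  · simp only [S, mem_image]
    exact ⟨(k, w m τ), mem_union_right _ (mem_image_of_mem _ (mem_univ τ)), rfl⟩
  · intro c t ht hmem
    have hT : ((k, w m τ) : A m) ∈ T m k :=
      mem_union_right _ (mem_image_of_mem _ (mem_univ τ))
    rw [mem_C_enc m k _ hT] at hmem
    rw [← hmem] at ht
    exact w_spec m τ c (hbad c) ht

/-- separation across partitions -/
lemma sep {i j : Fin m} (h : i ≠ j) (t u : Fin 3) :
    C m k i t ≠ C m k j u := by
  set τ : Idx m := ((i, t+1), (i, t+2), (j, u)) with hτ
  have hbad : ∀ c, forb m τ c ≠ Finset.univ := by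
    intro c heq
    by_cases hic : i = c <;> by_cases hjc : j = c
    · exact h (hic.trans hjc.symm)
    · have : forb m τ c = {t+1} ∪ {t+2} ∪ ∅ := by
        simp [forb, hτ, hic, hjc]
      rw [this] at heq
      have : t ∈ ({t+1} ∪ {t+2} ∪ (∅ : Finset (Fin 3))) := heq ▸ mem_univ t
      simp only [union_empty, mem_union, mem_singleton] at this
      have hne : ∀ t : Fin 3, t ≠ t+1 ∧ t ≠ t+2 := by decide
      rcases this with h1 | h1
      · exact (hne t).1 h1
      · exact (hne t).2 h1
    · have : forb m τ c = (∅ : Finset (Fin 3)) ∪ ∅ ∪ {u} := by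
        simp [forb, hτ, hic, hjc]
      rw [this] at heq
      have h3 := congrArg Finset.card heq
      simp at h3
    · have : forb m τ c = (∅ : Finset (Fin 3)) := by simp [forb, hτ, hic, hjc]
      rw [this] at heq
      exact absurd heq.symm (Finset.univ_nonempty.ne_empty)
  obtain ⟨n, hn, hnot⟩ := witness m k τ hbad
  have hi1 : (t+1 : Fin 3) ∈ forb m τ i := by simp [forb, hτ]
  have hi2 : (t+2 : Fin 3) ∈ forb m τ i := by simp [forb, hτ]
  have hju : u ∈ forb m τ j := by simp [forb, hτ, h.symm]
  -- n ∈ C i t: φ n i ∉ {t+1, t+2} so = t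
  have hnS : n ∈ S m k := hn
  have hφi : φ m n i = t := by
    have h1 : n ∉ C m k i (t+1) := hnot i (t+1) hi1
    have h2 : n ∉ C m k i (t+2) := hnot i (t+2) hi2
    simp only [C, mem_filter, not_and] at h1 h2
    have h1 := h1 hnS; have h2 := h2 hnS
    have key : ∀ a b : Fin 3, a ≠ b + 1 → a ≠ b + 2 → a = b := by decide
    exact key _ _ h1 h2
  intro heq
  have : n ∈ C m k i t := by simp [C, mem_filter, hnS, hφi]
  rw [heq] at this
  exact hnot j u hju this


lemma mem_Ciφ {n : ℕ} (hn : n ∈ S m k) (i : Fin m) : n ∈ C m k i (φ m n i) := by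
  simp [C, mem_filter, hn]

lemma three_partition (hk : 0 < k) (i : Fin m) : ThreePartition (S m k) (σf m k i) := by
  refine ⟨?_, ?_, ?_, ?_⟩
  · rw [σf]
    rw [card_insert_of_notMem, card_insert_of_notMem, card_singleton]
    · simp only [mem_singleton]
      exact C_ne m k hk i (by decide)
    · simp only [mem_insert, mem_singleton]
      push_neg
      exact ⟨C_ne m k hk i (by decide), C_ne m k hk i (by decide)⟩
  · intro c hc
    simp only [σf, mem_insert, mem_singleton] at hc
    rcases hc with rfl | rfl | rfl <;> exact C_nonempty m k hk i _
  · ext n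
    simp only [mem_biUnion, id, σf, mem_insert, mem_singleton]
    constructor
    · rintro ⟨c, (rfl | rfl | rfl), hc⟩ <;> exact C_subset m k i _ hc
    · intro hn
      refine ⟨C m k i (φ m n i), ?_, mem_Ciφ m k hn i⟩
      have : ∀ u : Fin 3, u = 0 ∨ u = 1 ∨ u = 2 := by decide
      rcases this (φ m n i) with h | h | h <;> rw [h] <;> tauto
  · intro c hc d hd hcd
    simp only [σf, mem_insert, mem_singleton] at hc hd
    rcases hc with rfl | rfl | rfl <;> rcases hd with rfl | rfl | rfl <;>
      first
        | exact absurd rfl hcd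
        | exact C_disjoint m k i (by decide)

lemma mem_σf_iff (i : Fin m) (c : Finset ℕ) :
    c ∈ σf m k i ↔ ∃ t, c = C m k i t := by
  simp only [σf, mem_insert, mem_singleton]
  constructor
  · rintro (rfl | rfl | rfl) <;> exact ⟨_, rfl⟩
  · rintro ⟨t, rfl⟩
    have : ∀ u : Fin 3, u = 0 ∨ u = 1 ∨ u = 2 := by decide
    rcases this t with h | h | h <;> rw [h] <;> tauto

lemma σf_inj (hk : 0 < k) : Function.Injective (σf m k) := by
  intro i j hij
  by_contra h
  have h0 : C m k i 0 ∈ σf m k j := by rw [← hij, mem_σf_iff]; exact ⟨0, rfl⟩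
  rw [mem_σf_iff] at h0
  obtain ⟨t, ht⟩ := h0
  exact sep m k h 0 t ht

lemma mem_F_biUnion (c : Finset ℕ) :
    c ∈ (F m k).biUnion id ↔ ∃ i t, c = C m k i t := by
  simp only [F, mem_biUnion, id, mem_image]
  constructor
  · rintro ⟨σ, ⟨i, _, rfl⟩, hc⟩
    obtain ⟨t, ht⟩ := (mem_σf_iff m k i c).mp hc
    exact ⟨i, t, ht⟩
  · rintro ⟨i, t, rfl⟩
    exact ⟨σf m k i, ⟨i, mem_univ i, rfl⟩, (mem_σf_iff m k i _).mpr ⟨t, rfl⟩⟩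

lemma forb_univ_case (τ : Idx m) (c : Fin m) (h : forb m τ c = Finset.univ) :
    τ.1.1 = c ∧ τ.2.1.1 = c ∧ τ.2.2.1 = c ∧
      ({τ.1.2, τ.2.1.2, τ.2.2.2} : Finset (Fin 3)) = Finset.univ := by
  have hcard : (forb m τ c).card = 3 := by rw [h]; simp
  have h1 : τ.1.1 = c := by
    by_contra hne
    have : forb m τ c ⊆ {τ.2.1.2} ∪ {τ.2.2.2} := by
      rw [forb, if_neg hne]
      refine union_subset (union_subset ?_ ?_) ?_
      · simp
      · split <;> simp
      · split <;> simp [Finset.subset_union_right]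
    have := Finset.card_le_card this
    have h2 : (({τ.2.1.2} ∪ {τ.2.2.2} : Finset (Fin 3))).card ≤ 2 :=
      le_trans (card_union_le _ _) (by simp)
    omega
  have h2 : τ.2.1.1 = c := by
    by_contra hne
    have : forb m τ c ⊆ {τ.1.2} ∪ {τ.2.2.2} := by
      rw [forb, if_neg hne]
      refine union_subset (union_subset ?_ ?_) ?_
      · split <;> simp
      · simp
      · split <;> simp [Finset.subset_union_right]
    have := Finset.card_le_card this
    have hc2 : (({τ.1.2} ∪ {τ.2.2.2} : Finset (Fin 3))).card ≤ 2 :=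
      le_trans (card_union_le _ _) (by simp)
    omega
  have h3 : τ.2.2.1 = c := by
    by_contra hne
    have : forb m τ c ⊆ {τ.1.2} ∪ {τ.2.1.2} := by
      rw [forb, if_neg hne]
      refine union_subset (union_subset ?_ ?_) ?_
      · split <;> simp
      · split <;> simp [Finset.subset_union_right]
      · simp
    have := Finset.card_le_card this
    have hc2 : (({τ.1.2} ∪ {τ.2.1.2} : Finset (Fin 3))).card ≤ 2 :=
      le_trans (card_union_le _ _) (by simp)
    omega
  refine ⟨h1, h2, h3, ?_⟩
  have : forb m τ c = {τ.1.2, τ.2.1.2, τ.2.2.2} := by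
    rw [forb, if_pos h1, if_pos h2, if_pos h3]
    ext x; simp [or_assoc]
  rw [← this, h]

lemma card_S : (S m k).card ≤ 27 * m ^ 3 + 3 * k := by
  calc (S m k).card ≤ (T m k).card := card_image_le
    _ ≤ (pad m k).card + (wit m k).card := card_union_le _ _
    _ ≤ 3 * k + 27 * m ^ 3 := by
        gcongr
        · calc (pad m k).card ≤ ((Finset.range k) ×ˢ (Finset.univ : Finset (Fin 3))).card :=
              card_image_le
            _ = 3 * k := by simp [mul_comm]
        · calc (wit m k).card ≤ (Finset.univ : Finset (Idx m)).card := card_image_le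
            _ = 27 * m ^ 3 := by
                simp [Finset.card_univ]
                ring
    _ = 27 * m ^ 3 + 3 * k := by ring

end Stmt1Aux

open Stmt1Aux Finset

/-- For all `m, k > 0` there exists a strict `(m,k)`-3-partitioning-system:
a family `F` of at least `m` pairwise class-disjoint 3-partitions of some
finite base set `S`, every class having at least `k` elements, such that the
only triples of classes whose union is `S` are the members of `F`;
moreover `|S| ≤ 27m³ + 2m + 3k`. -/
theorem stmt_1 (m k : ℕ) (hm : 0 < m) (hk : 0 < k) :
    ∃ (S : Finset ℕ) (F : Finset (Finset (Finset ℕ))),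
      (∀ σ ∈ F, ThreePartition S σ) ∧
      (∀ σ ∈ F, ∀ σ' ∈ F, σ ≠ σ' → Disjoint σ σ') ∧
      m ≤ F.card ∧
      (∀ C ∈ F.biUnion id, k ≤ C.card) ∧
      (∀ C₁ ∈ F.biUnion id, ∀ C₂ ∈ F.biUnion id, ∀ C₃ ∈ F.biUnion id,
          ({C₁, C₂, C₃} : Finset (Finset ℕ)) ∈ F ∨ C₁ ∪ C₂ ∪ C₃ ⊂ S) ∧
      S.card ≤ 27 * m ^ 3 + 2 * m + 3 * k := by
  classical
  refine ⟨S m k, F m k, ?_, ?_, ?_, ?_, ?_, ?_⟩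
  · intro σ hσ
    simp only [F, mem_image] at hσ
    obtain ⟨i, _, rfl⟩ := hσ
    exact three_partition m k hk i
  · intro σ hσ σ' hσ' hne
    simp only [F, mem_image] at hσ hσ'
    obtain ⟨i, _, rfl⟩ := hσ
    obtain ⟨j, _, rfl⟩ := hσ'
    have hij : i ≠ j := fun h => hne (h ▸ rfl)
    rw [Finset.disjoint_left]
    intro c hc hc'
    obtain ⟨t, rfl⟩ := (mem_σf_iff m k i c).mp hc
    obtain ⟨u, hu⟩ := (mem_σf_iff m k j _).mp hc'
    exact sep m k hij t u hu
  · have hcard := Finset.card_image_of_injective (Finset.univ : Finset (Fin m)) (σf_inj m k hk)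
    simp only [Finset.card_univ, Fintype.card_fin] at hcard
    rw [F, hcard]
  · intro c hc
    obtain ⟨i, t, rfl⟩ := (mem_F_biUnion m k c).mp hc
    exact card_C m k i t
  · intro C₁ h1 C₂ h2 C₃ h3
    obtain ⟨i, x, rfl⟩ := (mem_F_biUnion m k C₁).mp h1
    obtain ⟨j, y, rfl⟩ := (mem_F_biUnion m k C₂).mp h2
    obtain ⟨l, z, rfl⟩ := (mem_F_biUnion m k C₃).mp h3
    set τ : Idx m := ((i, x), (j, y), (l, z)) with hτ
    by_cases hbad : ∀ c, forb m τ c ≠ Finset.univ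
    · right
      obtain ⟨n, hn, hnot⟩ := witness m k τ hbad
      rw [Finset.ssubset_iff_of_subset]
      · refine ⟨n, hn, ?_⟩
        simp only [Finset.mem_union, not_or]
        refine ⟨⟨hnot i x ?_, hnot j y ?_⟩, hnot l z ?_⟩ <;> simp [forb, hτ]
      · refine Finset.union_subset (Finset.union_subset ?_ ?_) ?_ <;>
          exact C_subset m k _ _
    · left
      push_neg at hbad
      obtain ⟨c, hc⟩ := hbad
      obtain ⟨e1, e2, e3, hval⟩ := forb_univ_case m τ c hc
      simp only [hτ] at e1 e2 e3 hval
      have hj : j = i := e2.trans e1.symm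
      have hl : l = i := e3.trans e1.symm
      rw [hj, hl]
      have hF : σf m k i ∈ F m k := Finset.mem_image_of_mem _ (Finset.mem_univ i)
      have : ({C m k i x, C m k i y, C m k i z} : Finset (Finset ℕ)) = σf m k i := by
        ext a
        simp only [Finset.mem_insert, Finset.mem_singleton, mem_σf_iff]
        constructor
        · rintro (rfl | rfl | rfl) <;> exact ⟨_, rfl⟩
        · rintro ⟨t, rfl⟩
          have ht : t ∈ ({x, y, z} : Finset (Fin 3)) := hval ▸ Finset.mem_univ t
          simp only [Finset.mem_insert, Finset.mem_singleton] at ht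
          rcases ht with rfl | rfl | rfl <;> tauto
      rw [this]
      exact hF
  · calc (S m k).card ≤ 27 * m ^ 3 + 3 * k := card_S m k
      _ ≤ 27 * m ^ 3 + 2 * m + 3 * k := by omega
end

section
/- Let Q be a conjunctive query with variable set containing Γ = {V_{ij} | 1 ≤ i < j ≤ 8}, and suppose atoms(Q) contains a set Π = {P_1,...,P_8} of 8 atoms such that var(P_i) ∩ Γ = {V_{ki} : k < i} ∪ {V_{ik} : i < k}, and no atom outside Π contains any variable of Γ. If Q admits a pure query decomposition (T,λ) of width 4, then there exist two adjacent vertices p_1, p_2 of T with |λ(p_1)| = |λ(p_2)| = 4 and λ(p_1) ∪ λ(p_2) = Π. -/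
/-- A rooted tree on vertex type `P`, given by a parent function. -/
structure RTree (P : Type) where
  root : P
  parent : P → P
  parent_root : parent root = root
  reaches : ∀ p : P, ∃ n : ℕ, parent^[n] p = root

namespace RTree

variable {P : Type}

/-- `c` is a child of `p` in the rooted tree `T`. -/
def child (T : RTree P) (c p : P) : Prop := c ≠ T.root ∧ T.parent c = p

/-- `p` belongs to the subtree `T_s` rooted at `s`. -/
def inSubtree (T : RTree P) (s p : P) : Prop := ∃ n : ℕ, T.parent^[n] p = s

/-- The undirected adjacency graph of the rooted tree. -/
def graph (T : RTree P) : SimpleGraph P where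
  Adj p q := (p ≠ T.root ∧ T.parent p = q) ∨ (q ≠ T.root ∧ T.parent q = p)
  symm := by
    constructor
    intro p q h
    rcases h with h | h
    · exact Or.inr h
    · exact Or.inl h
  loopless := by
    constructor
    intro p h
    have hh : p ≠ T.root ∧ T.parent p = p := by rcases h with h | h <;> exact h
    obtain ⟨n, hn⟩ := T.reaches p
    have hfix : ∀ m : ℕ, T.parent^[m] p = p := by
      intro m
      induction m with
      | zero => rfl
      | succ m ih => rw [Function.iterate_succ_apply, hh.2]; exact ih
    exact hh.1 (by rw [← hfix n]; exact hn)

end RTree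

/-- A conjunctive query: a set of atoms `A`, each with its set of variables. -/
structure CQ (V A : Type) where
  var : A → Set V

namespace CQ

variable {V A : Type}

/-- The variables of the query. -/
def vars (Q : CQ V A) : Set V := ⋃ a : A, Q.var a

/-- The variables occurring in a set of atoms. -/
def varSet (Q : CQ V A) (S : Set A) : Set V := ⋃ a ∈ S, Q.var a

/-- `x` and `y` are `[S]`-adjacent. -/
def adjOut (Q : CQ V A) (S : Set V) (x y : V) : Prop :=
  ∃ a : A, x ∈ Q.var a ∧ y ∈ Q.var a ∧ x ∉ S ∧ y ∉ S

/-- `W` is an `[S]`-connected set of variables. -/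
def ConnSet (Q : CQ V A) (S W : Set V) : Prop :=
  W ⊆ Q.vars \ S ∧ ∀ x ∈ W, ∀ y ∈ W, Relation.ReflTransGen (Q.adjOut S) x y

/-- `C` is an `[S]`-component: a maximal nonempty `[S]`-connected set. -/
def IsComp (Q : CQ V A) (S C : Set V) : Prop :=
  C.Nonempty ∧ Q.ConnSet S C ∧ ∀ C' : Set V, Q.ConnSet S C' → C ⊆ C' → C' = C

/-- `Q` is acyclic: it admits a join tree, i.e. a tree on its atoms in which
the occurrences of each variable induce a connected subtree. -/
def acyclic (Q : CQ V A) : Prop :=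
  ∃ T : RTree A, ∀ v ∈ Q.vars, (T.graph.induce {a : A | v ∈ Q.var a}).Connected

end CQ

/-- A hypertree decomposition of `Q` on the rooted tree `T`. -/
structure HTD {V A P : Type} (Q : CQ V A) (T : RTree P) where
  χ : P → Set V
  lam : P → Set A
  cover : ∀ a : A, ∃ p : P, Q.var a ⊆ χ p
  conn : ∀ v ∈ Q.vars, (T.graph.induce {p : P | v ∈ χ p}).Connected
  chiSub : ∀ p : P, χ p ⊆ Q.varSet (lam p)
  special : ∀ p : P, Q.varSet (lam p) ∩ (⋃ q ∈ {q : P | T.inSubtree p q}, χ q) ⊆ χ p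

namespace HTD

variable {V A P : Type} {Q : CQ V A} {T : RTree P}

/-- `χ(T_s)`: the union of the `χ` labels over the subtree rooted at `s`. -/
def χSub (D : HTD Q T) (s : P) : Set V := ⋃ q ∈ {q : P | T.inSubtree s q}, D.χ q

/-- The decomposition has width at most `k`. -/
def widthLE (D : HTD Q T) (k : ℕ) : Prop :=
  ∀ p : P, (D.lam p).Finite ∧ (D.lam p).ncard ≤ k

/-- The decomposition is complete. -/
def complete (D : HTD Q T) : Prop := ∀ a : A, ∃ p : P, Q.var a ⊆ D.χ p ∧ a ∈ D.lam p

/-- `vertices(W, HD)`: the vertices whose `χ` label meets `W`. -/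
def verts (D : HTD Q T) (W : Set V) : Set P := {p : P | (D.χ p ∩ W).Nonempty}

/-- Normal form of a hypertree decomposition. -/
def NF (D : HTD Q T) : Prop := ∀ r s : P, T.child s r →
  (∃! C : Set V, Q.IsComp (D.χ r) C ∧ D.χSub s = C ∪ (D.χ s ∩ D.χ r)) ∧
  (∀ C : Set V, Q.IsComp (D.χ r) C → D.χSub s = C ∪ (D.χ s ∩ D.χ r) →
     (D.χ s ∩ C).Nonempty) ∧
  (Q.varSet (D.lam s) ∩ D.χ r ⊆ D.χ s)

/-- `tc` is the `treecomp` function of a normal-form decomposition. -/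
def IsTreeComp (D : HTD Q T) (tc : P → Set V) : Prop :=
  tc T.root = Q.vars ∧ ∀ s : P, s ≠ T.root →
    Q.IsComp (D.χ (T.parent s)) (tc s) ∧
    D.χSub s = tc s ∪ (D.χ s ∩ D.χ (T.parent s))

end HTD

/-- `Q` has hypertree width at most `k`. -/
def CQ.hwLE {V A : Type} (Q : CQ V A) (k : ℕ) : Prop :=
  ∃ (P : Type) (T : RTree P) (D : HTD Q T), D.widthLE k

/-- The hypertree width of `Q`. -/
noncomputable def CQ.hw {V A : Type} (Q : CQ V A) : ℕ := sInf {k : ℕ | Q.hwLE k}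

/-- A query decomposition of `Q` on the rooted tree `T`
(labels may contain both atoms and variables). -/
structure QDec {V A P : Type} (Q : CQ V A) (T : RTree P) where
  la : P → Set A
  lv : P → Set V
  coverA : ∀ a : A, ∃ p : P, a ∈ la p
  connA : ∀ a : A, (T.graph.induce {p : P | a ∈ la p}).Connected
  connV : ∀ v ∈ Q.vars,
    (T.graph.induce {p : P | v ∈ lv p ∨ ∃ a ∈ la p, v ∈ Q.var a}).Connected

namespace QDec

variable {V A P : Type} {Q : CQ V A} {T : RTree P}

/-- A query decomposition is pure if labels contain atoms only. -/
def pure (D : QDec Q T) : Prop := ∀ p : P, D.lv p = ∅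

/-- The query decomposition has width at most `k`. -/
def widthLE (D : QDec Q T) (k : ℕ) : Prop :=
  ∀ p : P, (D.la p).Finite ∧ (D.lv p).Finite ∧ (D.la p).ncard + (D.lv p).ncard ≤ k

end QDec

/-- `Q` has query width at most `k`. -/
def CQ.qwLE {V A : Type} (Q : CQ V A) (k : ℕ) : Prop :=
  ∃ (P : Type) (T : RTree P) (D : QDec Q T), D.widthLE k

/-- The query width of `Q`. -/
noncomputable def CQ.qw {V A : Type} (Q : CQ V A) : ℕ := sInf {k : ℕ | Q.qwLE k}

namespace RTreeAux

variable {P : Type} (T : RTree P)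

def anc (a b : P) : Prop := ∃ n : ℕ, T.parent^[n] b = a

variable {T}

lemma anc_refl (a : P) : anc T a a := ⟨0, rfl⟩

lemma anc_trans {a b c : P} (h1 : anc T a b) (h2 : anc T b c) : anc T a c := by
  obtain ⟨m, hm⟩ := h1; obtain ⟨n, hn⟩ := h2
  exact ⟨m + n, by rw [Function.iterate_add_apply, hn, hm]⟩

lemma anc_parent (a : P) : anc T (T.parent a) a := ⟨1, rfl⟩

lemma iterate_root (n : ℕ) : T.parent^[n] T.root = T.root :=
  Function.iterate_fixed T.parent_root n

noncomputable def dep (T : RTree P) (p : P) : ℕ := sInf {n : ℕ | T.parent^[n] p = T.root}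

lemma dep_spec (p : P) : T.parent^[dep T p] p = T.root :=
  Nat.sInf_mem (T.reaches p)

lemma dep_le {p : P} {k : ℕ} (h : T.parent^[k] p = T.root) : dep T p ≤ k :=
  Nat.sInf_le h

lemma dep_eq_zero_iff {p : P} : dep T p = 0 ↔ p = T.root := by
  constructor
  · intro h
    have := dep_spec (T := T) p
    rwa [h, Function.iterate_zero_apply] at this
  · rintro rfl
    exact Nat.eq_zero_of_le_zero (dep_le (by rw [Function.iterate_zero_apply]))

lemma fixed_eq_root {p : P} (h : T.parent p = p) : p = T.root := by
  obtain ⟨n, hn⟩ := T.reaches p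
  have hfix : ∀ m : ℕ, T.parent^[m] p = p := by
    intro m
    induction m with
    | zero => rfl
    | succ m ih => rw [Function.iterate_succ_apply, h]; exact ih
  rw [← hfix n]; exact hn

lemma dep_parent_lt {p : P} (h : p ≠ T.root) : dep T (T.parent p) < dep T p := by
  have h0 : dep T p ≠ 0 := fun hh => h (dep_eq_zero_iff.mp hh)
  obtain ⟨k, hk⟩ := Nat.exists_eq_succ_of_ne_zero h0
  have : T.parent^[k] (T.parent p) = T.root := by
    rw [← Function.iterate_succ_apply, ← hk]; exact dep_spec p
  calc dep T (T.parent p) ≤ k := dep_le this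
    _ < dep T p := by omega

lemma dep_parent_le (p : P) : dep T (T.parent p) ≤ dep T p := by
  by_cases h : p = T.root
  · subst h; rw [T.parent_root]
  · exact (dep_parent_lt h).le

lemma dep_iterate_le (n : ℕ) (p : P) : dep T (T.parent^[n] p) ≤ dep T p := by
  induction n with
  | zero => rfl
  | succ n ih =>
    rw [Function.iterate_succ_apply']
    exact le_trans (dep_parent_le _) ih

lemma dep_anc_le {a b : P} (h : anc T a b) : dep T a ≤ dep T b := by
  obtain ⟨n, hn⟩ := h; rw [← hn]; exact dep_iterate_le n b

lemma anc_antisymm {a b : P} (h : anc T a b) (hd : dep T a = dep T b) : a = b := by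
  obtain ⟨n, hn⟩ := h
  match n with
  | 0 => exact hn.symm
  | Nat.succ k =>
    by_cases hb : b = T.root
    · subst hb; rw [iterate_root] at hn; rw [← hn]
    · exfalso
      have h1 : dep T a ≤ dep T (T.parent b) := by
        rw [← hn, Function.iterate_succ_apply]
        exact dep_iterate_le k (T.parent b)
      have h2 := dep_parent_lt (T := T) hb
      omega

lemma anc_antisymm' {a b : P} (h1 : anc T a b) (h2 : anc T b a) : a = b :=
  anc_antisymm h1 (le_antisymm (dep_anc_le h1) (dep_anc_le h2))

lemma anc_comparable {a b c : P} (h1 : anc T a c) (h2 : anc T b c) :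
    anc T a b ∨ anc T b a := by
  obtain ⟨i, hi⟩ := h1; obtain ⟨j, hj⟩ := h2
  rcases le_total i j with h | h
  · right
    refine ⟨j - i, ?_⟩
    rw [← hi, ← Function.iterate_add_apply]
    rw [Nat.sub_add_cancel h, hj]
  · left
    refine ⟨i - j, ?_⟩
    rw [← hj, ← Function.iterate_add_apply]
    rw [Nat.sub_add_cancel h, hi]

end RTreeAux

section MeetLemmas

open RTreeAux

variable {P : Type} {T : RTree P}

lemma meet_of_walk {S : Set P} {x y : ↥S} (w : (T.graph.induce S).Walk x y) :
    ∃ m : P, anc T m ↑x ∧ anc T m ↑y ∧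
      (∀ z : P, anc T z ↑x → anc T m z → z ∈ S) ∧
      (∀ z : P, anc T z ↑y → anc T m z → z ∈ S) := by
  induction w with
  | nil =>
    rename_i x
    refine ⟨↑x, anc_refl _, anc_refl _, ?_, ?_⟩ <;>
    · intro z h1 h2
      have : z = ↑x := anc_antisymm' h1 h2
      rw [this]; exact x.2
  | cons h w ih =>
    rename_i x x' y
    obtain ⟨m, hm1, hm2, hseg1, hseg2⟩ := ih
    have hadj : T.graph.Adj ↑x ↑x' := h
    rcases hadj with ⟨hxr, hxp⟩ | ⟨hx'r, hx'p⟩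
    · -- parent x = x'
      have hmx : anc T m ↑x := anc_trans hm1 ⟨1, by simpa using hxp⟩
      refine ⟨m, hmx, hm2, ?_, hseg2⟩
      rintro z ⟨i, hi⟩ hmz
      match i with
      | 0 => rw [← hi]; exact x.2
      | Nat.succ i' =>
        refine hseg1 z ⟨i', ?_⟩ hmz
        rw [← hi, ← hxp, ← Function.iterate_succ_apply]
    · -- parent x' = x
      obtain ⟨k, hk⟩ := hm1
      match k with
      | 0 =>
        -- m = x'
        have hmx' : m = ↑x' := hk.symm
        refine ⟨↑x, anc_refl _, ?_, ?_, ?_⟩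
        · have hx'y : anc T ↑x' ↑y := hmx' ▸ hm2
          exact anc_trans ⟨1, by simpa using hx'p⟩ hx'y
        · intro z h1 h2
          have : z = ↑x := anc_antisymm' h1 h2
          rw [this]; exact x.2
        · intro z h1 h2
          have hx'y : anc T ↑x' ↑y := hmx' ▸ hm2
          rcases anc_comparable h1 hx'y with hz | hz
          · obtain ⟨i', hi'⟩ := hz
            match i' with
            | 0 => rw [← hi']; exact x'.2
            | Nat.succ j =>
              have : anc T z ↑x := ⟨j, by rw [← hi', ← hx'p, ← Function.iterate_succ_apply]⟩
              have hzx : z = ↑x := anc_antisymm' this h2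
              rw [hzx]; exact x.2
          · exact hseg2 z h1 (hmx' ▸ hz)
      | Nat.succ k' =>
        have hmx : anc T m ↑x := ⟨k', by rw [← hk, ← hx'p, ← Function.iterate_succ_apply]⟩
        refine ⟨m, hmx, hm2, ?_, hseg2⟩
        rintro z ⟨i, hi⟩ hmz
        refine hseg1 z ⟨i + 1, ?_⟩ hmz
        rw [Function.iterate_add_apply, Function.iterate_one, hx'p, hi]

lemma meet_of_conn {S : Set P} (h : (T.graph.induce S).Connected)
    {a b : P} (ha : a ∈ S) (hb : b ∈ S) :
    ∃ m : P, anc T m a ∧ anc T m b ∧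
      (∀ z : P, anc T z a → anc T m z → z ∈ S) ∧
      (∀ z : P, anc T z b → anc T m z → z ∈ S) := by
  obtain ⟨w⟩ := h.preconnected ⟨a, ha⟩ ⟨b, hb⟩
  exact meet_of_walk w

lemma exists_top {S : Set P} (hne : S.Nonempty)
    (hconn : (T.graph.induce S).Connected) :
    ∃ t ∈ S, ∀ x ∈ S, anc T t x := by
  have hne' : (dep T '' S).Nonempty := hne.image _
  obtain ⟨t, htS, htd⟩ := Nat.sInf_mem hne'
  refine ⟨t, htS, fun x hx => ?_⟩
  obtain ⟨m, hmt, hmx, hseg1, _⟩ := meet_of_conn hconn htS hx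
  have hmS : m ∈ S := hseg1 m hmt (anc_refl _)
  have h1 : dep T t ≤ dep T m := htd ▸ Nat.sInf_le ⟨m, hmS, rfl⟩
  have h2 : dep T m ≤ dep T t := dep_anc_le hmt
  have : m = t := anc_antisymm hmt (le_antisymm h2 h1)
  rwa [this] at hmx

end MeetLemmas

/-- Lemma on blocks: if `Q` contains variables `Γ = {V_{ij} | 1 ≤ i < j ≤ 8}` and eight
atoms `Π = {P_1,…,P_8}` with `var(P_i) ∩ Γ = {V_{ki} : k < i} ∪ {V_{ik} : i < k}`, and no
atom outside `Π` meets `Γ`, then any pure query decomposition of width 4 of `Q` has two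
adjacent vertices `p₁, p₂` with `|λ(p₁)| = |λ(p₂)| = 4` and `λ(p₁) ∪ λ(p₂) = Π`. -/
theorem stmt_2 {V A P : Type} (Q : CQ V A) (T : RTree P)
    (Vv : Fin 8 → Fin 8 → V) (Pa : Fin 8 → A)
    (hVinj : ∀ i j i' j' : Fin 8, i < j → i' < j' → Vv i j = Vv i' j' → i = i' ∧ j = j')
    (hPinj : Function.Injective Pa)
    (Γ : Set V) (hΓ : Γ = {x : V | ∃ i j : Fin 8, i < j ∧ x = Vv i j})
    (hvarP : ∀ i : Fin 8, Q.var (Pa i) ∩ Γ =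
      {x : V | (∃ k : Fin 8, k < i ∧ x = Vv k i) ∨ (∃ k : Fin 8, i < k ∧ x = Vv i k)})
    (hout : ∀ a : A, a ∉ Set.range Pa → Q.var a ∩ Γ = ∅)
    (D : QDec Q T) (hpure : D.pure) (hw : D.widthLE 4) :
    ∃ p₁ p₂ : P, T.graph.Adj p₁ p₂ ∧ (D.la p₁).ncard = 4 ∧ (D.la p₂).ncard = 4 ∧
      D.la p₁ ∪ D.la p₂ = Set.range Pa := by
  classical
  open RTreeAux in
  have hwla : ∀ p : P, (D.la p).Finite ∧ (D.la p).ncard ≤ 4 := by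
    intro p
    obtain ⟨h1, _, h3⟩ := hw p
    exact ⟨h1, le_trans (Nat.le_add_right _ _) h3⟩
  set S : Fin 8 → Set P := fun i => {p : P | Pa i ∈ D.la p} with hS
  have hSconn : ∀ i, (T.graph.induce (S i)).Connected := fun i => D.connA (Pa i)
  have hSne : ∀ i, (S i).Nonempty := fun i => D.coverA (Pa i)
  have hvmem : ∀ i j : Fin 8, i < j → Vv i j ∈ Q.var (Pa i) ∧ Vv i j ∈ Q.var (Pa j) := by
    intro i j hij
    constructor
    · have : Vv i j ∈ Q.var (Pa i) ∩ Γ := by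
        rw [hvarP i]; exact Or.inr ⟨j, hij, rfl⟩
      exact this.1
    · have : Vv i j ∈ Q.var (Pa j) ∩ Γ := by
        rw [hvarP j]; exact Or.inl ⟨i, hij, rfl⟩
      exact this.1
  have hU : ∀ i j : Fin 8, i < j → (T.graph.induce (S i ∪ S j)).Connected := by
    intro i j hij
    have hΓv : Vv i j ∈ Γ := by rw [hΓ]; exact ⟨i, j, hij, rfl⟩
    have hvars : Vv i j ∈ Q.vars := Set.mem_iUnion.2 ⟨Pa i, (hvmem i j hij).1⟩
    have hset : {p : P | Vv i j ∈ D.lv p ∨ ∃ a ∈ D.la p, Vv i j ∈ Q.var a} = S i ∪ S j := by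
      ext p
      constructor
      · rintro (h | ⟨a, ha, hv⟩)
        · rw [hpure p] at h; exact absurd h (Set.notMem_empty _)
        · by_cases hr : a ∈ Set.range Pa
          · obtain ⟨l, rfl⟩ := hr
            have : Vv i j ∈ Q.var (Pa l) ∩ Γ := ⟨hv, hΓv⟩
            rw [hvarP l] at this
            rcases this with ⟨k, hkl, heq⟩ | ⟨k, hlk, heq⟩
            · obtain ⟨h1, h2⟩ := hVinj i j k l hij hkl heq
              subst h2; exact Or.inr ha
            · obtain ⟨h1, h2⟩ := hVinj i j l k hij hlk heq
              subst h1; exact Or.inl ha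
          · have hmem : Vv i j ∈ Q.var a ∩ Γ := ⟨hv, hΓv⟩
            rw [hout a hr] at hmem
            exact absurd hmem (Set.notMem_empty _)
      · rintro (h | h)
        · exact Or.inr ⟨Pa i, h, (hvmem i j hij).1⟩
        · exact Or.inr ⟨Pa j, h, (hvmem i j hij).2⟩
    have := D.connV (Vv i j) hvars
    rwa [hset] at this
  have hU' : ∀ i j : Fin 8, i ≠ j → (T.graph.induce (S i ∪ S j)).Connected := by
    intro i j hij
    rcases lt_or_gt_of_ne hij with h | h
    · exact hU i j h
    · rw [Set.union_comm]; exact hU j i h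
  -- tops
  have htop : ∀ i, ∃ t ∈ S i, ∀ x ∈ S i, anc T t x := fun i =>
    exists_top (hSne i) (hSconn i)
  choose t ht htt using htop
  obtain ⟨m, hmax⟩ := Finite.exists_max (fun i => dep T (t i))
  -- key claim
  have hkey : ∀ i : Fin 8, Pa i ∈ D.la (t m) ∨ Pa i ∈ D.la (T.parent (t m)) := by
    intro i
    by_cases him : i = m
    · subst him; exact Or.inl (ht i)
    · obtain ⟨m0, hm0ti, hm0tm, hseg1, hseg2⟩ :=
        meet_of_conn (hU' i m him) (Or.inl (ht i)) (Or.inr (ht m))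
    -- m0 ∈ S i ∪ S m
      have hm0W : m0 ∈ S i ∪ S m := hseg1 m0 hm0ti (anc_refl _)
      by_cases h0 : m0 = t m
      · -- anc (t m) (t i), dep max → t m = t i
        subst h0
        have h1 : dep T (t m) ≤ dep T (t i) := dep_anc_le hm0ti
        have h2 : dep T (t i) ≤ dep T (t m) := hmax i
        have : t m = t i := anc_antisymm hm0ti (le_antisymm h1 h2)
        exact Or.inl (this ▸ ht i)
      rcases hm0W with hm0i | hm0m
      case neg.inr =>
        -- m0 ∈ S m: top forces m0 = t m, contradiction
        exact absurd (anc_antisymm' hm0tm (htt m m0 hm0m)) h0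
      case neg.inl =>
        -- m0 ∈ S i, m0 ≠ t m, anc m0 (t m)
        obtain ⟨n, hn⟩ := hm0tm
        match n, hn with
        | 0, hn => exact absurd hn.symm h0
        | Nat.succ n', hn =>
          have hancp : anc T m0 (T.parent (t m)) :=
            ⟨n', by rw [← Function.iterate_succ_apply, hn]⟩
          have hpW : T.parent (t m) ∈ S i ∪ S m :=
            hseg2 (T.parent (t m)) (anc_parent _) hancp
          rcases hpW with hp | hp
          · exact Or.inr hp
          · exfalso
            have h1 : anc T (t m) (T.parent (t m)) := htt m _ hp
            have h2 : T.parent (t m) = t m := anc_antisymm' (anc_parent _) h1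
            have hroot : t m = T.root := fixed_eq_root h2
            apply h0
            rw [← hn, hroot, iterate_root]
  -- counting
  have hrange8 : (Set.range Pa).ncard = 8 := by
    rw [← Set.image_univ, Set.ncard_image_of_injective _ hPinj, Set.ncard_univ]
    simp
  set p₁ := t m with hp1
  set p₂ := T.parent (t m) with hp2
  have hsub : Set.range Pa ⊆ D.la p₁ ∪ D.la p₂ := by
    rintro _ ⟨i, rfl⟩; exact hkey i
  have hf1 := (hwla p₁).1
  have hf2 := (hwla p₂).1
  have hn1 := (hwla p₁).2
  have hn2 := (hwla p₂).2
  have hroot : p₁ ≠ T.root := by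
    intro hr
    have hpp : p₂ = p₁ := by show T.parent p₁ = p₁; rw [hr, T.parent_root]
    have hsub' : Set.range Pa ⊆ D.la p₁ := by
      rintro _ ⟨i, rfl⟩
      rcases hkey i with h | h
      · exact h
      · rw [← hpp]; exact h
    have := Set.ncard_le_ncard hsub' hf1
    rw [hrange8] at this
    omega
  have huf : (D.la p₁ ∪ D.la p₂).Finite := hf1.union hf2
  have h8le : 8 ≤ (D.la p₁ ∪ D.la p₂).ncard := by
    have := Set.ncard_le_ncard hsub huf
    rwa [hrange8] at this
  have hule : (D.la p₁ ∪ D.la p₂).ncard ≤ (D.la p₁).ncard + (D.la p₂).ncard :=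
    Set.ncard_union_le _ _
  have hequ : D.la p₁ ∪ D.la p₂ = Set.range Pa := by
    have := Set.eq_of_subset_of_ncard_le hsub (by omega) huf
    exact this.symm
  exact ⟨p₁, p₂, Or.inl ⟨hroot, rfl⟩, by omega, by omega, hequ⟩
end

section
/- Let (T,χ,λ) be a hypertree decomposition of a conjunctive query Q, let r be a vertex of T, let s be a child of r, and let C be an [χ(r)]-component of Q such that C ∩ χ(T_s) ≠ ∅. Then every vertex of T whose χ-label intersects C belongs to the subtree T_s rooted at s. -/
/-- If `s` is a child of `r` and `C` is a `[χ(r)]`-component with `C ∩ χ(T_s) ≠ ∅`,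
then every vertex whose `χ` label meets `C` lies in the subtree `T_s`. -/
theorem stmt_5 {V A P : Type} (Q : CQ V A) (T : RTree P) (D : HTD Q T)
    (r s : P) (hcs : T.child s r) (C : Set V) (hC : Q.IsComp (D.χ r) C)
    (hint : (C ∩ D.χSub s).Nonempty) :
    ∀ p : P, (D.χ p ∩ C).Nonempty → T.inSubtree s p := by
  obtain ⟨hs_ne, hs_par⟩ := hcs
  obtain ⟨v0, hv0C, hv0sub⟩ := hint
  simp only [HTD.χSub, Set.mem_iUnion, Set.mem_setOf_eq, exists_prop] at hv0sub
  obtain ⟨q0, hq0, hv0q0⟩ := hv0sub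
  have hsub : C ⊆ Q.vars \ D.χ r := hC.2.1.1
  have hpar : ∀ b : P, T.inSubtree s b → b ≠ s → T.inSubtree s (T.parent b) := by
    rintro b ⟨n, hn⟩ hbs
    cases n with
    | zero => exact absurd hn hbs
    | succ k => exact ⟨k, by rw [← Function.iterate_succ_apply]; exact hn⟩
  have occ : ∀ v ∈ Q.vars, v ∉ D.χ r → ∀ q : P, T.inSubtree s q → v ∈ D.χ q →
      ∀ p : P, v ∈ D.χ p → T.inSubtree s p := by
    intro v hv hvr q hq hvq p hvp
    have hreach := ((D.conn v hv).preconnected ⟨q, hvq⟩ ⟨p, hvp⟩)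
    rw [SimpleGraph.reachable_iff_reflTransGen] at hreach
    have key : ∀ a b : {p : P | v ∈ D.χ p},
        Relation.ReflTransGen (T.graph.induce {p : P | v ∈ D.χ p}).Adj a b →
        T.inSubtree s a.1 → T.inSubtree s b.1 := by
      intro a b hab
      induction hab with
      | refl => exact fun h => h
      | tail hxy hadj ih =>
        rename_i x y
        intro ha
        have hx := ih ha
        rcases hadj with ⟨hne, hp⟩ | ⟨hne, hp⟩ <;>
          simp only [Function.Embedding.coe_subtype] at hne hp
        · by_cases hxs : x.1 = s
          · exfalso
            have : y.1 = r := by rw [← hp, hxs, hs_par]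
            exact hvr (this ▸ y.2)
          · rw [← hp]; exact hpar x.1 hx hxs
        · obtain ⟨n, hn⟩ := hx
          exact ⟨n + 1, by rw [Function.iterate_succ_apply, hp]; exact hn⟩
    exact key _ _ hreach hq
  intro p hp
  obtain ⟨w, hwp, hwC⟩ := hp
  have hchain : Relation.ReflTransGen (Q.adjOut (D.χ r)) v0 w :=
    hC.2.1.2 v0 hv0C w hwC
  have good : ∃ q : P, T.inSubtree s q ∧ w ∈ D.χ q := by
    clear hwp hwC
    induction hchain with
    | refl => exact ⟨q0, hq0, hv0q0⟩
    | tail hxy hadj ih =>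
      rename_i x y
      obtain ⟨q1, hq1, hxq1⟩ := ih
      obtain ⟨a, hxa, hya, hxr, hyr⟩ := hadj
      obtain ⟨p1, hcov⟩ := D.cover a
      have hxv : x ∈ Q.vars := Set.mem_iUnion.mpr ⟨a, hxa⟩
      have hp1 : T.inSubtree s p1 := occ x hxv hxr q1 hq1 hxq1 p1 (hcov hxa)
      exact ⟨p1, hp1, hcov hya⟩
  obtain ⟨q1, hq1, hwq1⟩ := good
  exact occ w (hsub hwC).1 (hsub hwC).2 q1 hq1 hwq1 p hwp
end

section
/- Let (T,χ,λ) be a normal-form hypertree decomposition of a conjunctive query Q, v a vertex of T, and W = treecomp(v) − χ(v). Then for any [χ(v)]-component C with C ∩ W ≠ ∅, we have C ⊆ W; consequently the [χ(v)]-components contained in treecomp(v) form a partition of treecomp(v) − χ(v). -/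
section Aux

variable {V A P : Type} {Q : CQ V A} {T : RTree P}

lemma adjOut_symm (Q : CQ V A) (S : Set V) : Symmetric (Q.adjOut S) := by
  rintro x y ⟨a, hx, hy, hxS, hyS⟩; exact ⟨a, hy, hx, hyS, hxS⟩

lemma subtree_step (T : RTree P) {v a b : P} (ha : T.inSubtree v a) (hav : a ≠ v)
    (hadj : T.graph.Adj a b) : T.inSubtree v b := by
  obtain ⟨n, hn⟩ := ha
  rcases hadj with ⟨_, hpa⟩ | ⟨_, hpb⟩
  · cases n with
    | zero => exact absurd hn hav
    | succ m => exact ⟨m, by rw [← hn, Function.iterate_succ_apply, hpa]⟩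
  · exact ⟨n + 1, by rw [Function.iterate_succ_apply, hpb, hn]⟩

lemma reach_subtree (T : RTree P) {v : P} {S : Set P} (hv : v ∉ S)
    {a b : S} (h : (T.graph.induce S).Reachable a b)
    (ha : T.inSubtree v (a : P)) : T.inSubtree v (b : P) := by
  obtain ⟨w⟩ := h
  induction w with
  | nil => exact ha
  | @cons x y z hadj w ih =>
    exact ih (subtree_step T ha (fun hxv => hv (hxv ▸ x.2)) hadj)

/-- The canonical `[S]`-component containing `x`. -/
def compSet (Q : CQ V A) (S : Set V) (x : V) : Set V :=
  {y | y ∈ Q.vars \ S ∧ Relation.ReflTransGen (Q.adjOut S) x y}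

lemma mem_compSet_self {S : Set V} {x : V} (hx : x ∈ Q.vars \ S) :
    x ∈ compSet Q S x := ⟨hx, Relation.ReflTransGen.refl⟩

lemma compSet_connSet {S : Set V} {x : V} : Q.ConnSet S (compSet Q S x) := by
  refine ⟨fun y hy => hy.1, fun y hy z hz => ?_⟩
  exact Relation.ReflTransGen.trans
    (haveI : Std.Symm (Q.adjOut S) := ⟨fun a b h => adjOut_symm Q S h⟩;
      Relation.ReflTransGen.symmetric.symm _ _ hy.2) hz.2

lemma compSet_isComp {S : Set V} {x : V} (hx : x ∈ Q.vars \ S) :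
    Q.IsComp S (compSet Q S x) := by
  refine ⟨⟨x, mem_compSet_self hx⟩, compSet_connSet, fun C' hC' hsub => ?_⟩
  apply Set.Subset.antisymm _ hsub
  intro w hw
  exact ⟨hC'.1 hw, hC'.2 x (hsub (mem_compSet_self hx)) w hw⟩

lemma isComp_eq_compSet {S C : Set V} {x : V} (hC : Q.IsComp S C) (hx : x ∈ C) :
    C = compSet Q S x := by
  have hsub : C ⊆ compSet Q S x := fun w hw =>
    ⟨hC.2.1.1 hw, hC.2.1.2 x hx w hw⟩
  exact (hC.2.2 _ compSet_connSet hsub).symm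

lemma tc_subset_vars (D : HTD Q T) {tc : P → Set V} (htc : D.IsTreeComp tc)
    (v : P) : tc v ⊆ Q.vars := by
  by_cases hv : v = T.root
  · rw [hv, htc.1]
  · exact fun x hx => ((htc.2 v hv).1.2.1.1 hx).1

/-- Key closure lemma: `W = tc v \ χ v` is closed under `[χ v]`-adjacency. -/
lemma W_closed (D : HTD Q T) {tc : P → Set V} (htc : D.IsTreeComp tc) (v : P)
    {x y : V} (hx : x ∈ tc v \ D.χ v) (hxy : Q.adjOut (D.χ v) x y) :
    y ∈ tc v \ D.χ v := by
  obtain ⟨a, hxa, hya, hxv, hyv⟩ := hxy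
  have hyQ : y ∈ Q.vars := Set.mem_iUnion.mpr ⟨a, hya⟩
  by_cases hv : v = T.root
  · exact ⟨by rw [hv, htc.1]; exact hyQ, hyv⟩
  · obtain ⟨hcomp, heq⟩ := htc.2 v hv
    -- x ∈ χSub v
    have hxsub : x ∈ D.χSub v := by rw [heq]; exact Or.inl hx.1
    obtain ⟨Sq, ⟨q, rfl⟩, hq⟩ := hxsub
    simp only [Set.mem_iUnion] at hq
    obtain ⟨hqsub, hxq⟩ := hq
    -- vertex p covering atom a
    obtain ⟨p, hp⟩ := D.cover a
    have hxQ : x ∈ Q.vars := Set.mem_iUnion.mpr ⟨a, hxa⟩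
    have hconn := D.conn x hxQ
    have hvnot : v ∉ {p : P | x ∈ D.χ p} := hxv
    have hreach : (T.graph.induce {p : P | x ∈ D.χ p}).Reachable
        ⟨q, hxq⟩ ⟨p, hp hxa⟩ := hconn.preconnected _ _
    have hpsub : T.inSubtree v p := reach_subtree T hvnot hreach hqsub
    have hysub : y ∈ D.χSub v := by
      refine Set.mem_biUnion hpsub (hp hya)
    rw [heq] at hysub
    rcases hysub with h | h
    · exact ⟨h, hyv⟩
    · exact absurd h.1 hyv

lemma compSet_subset_W (D : HTD Q T) {tc : P → Set V} (htc : D.IsTreeComp tc)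
    (v : P) {x : V} (hx : x ∈ tc v \ D.χ v) (hxQ : x ∈ Q.vars) :
    compSet Q (D.χ v) x ⊆ tc v \ D.χ v := by
  rintro y ⟨-, hwalk⟩
  induction hwalk with
  | refl => exact hx
  | tail _ hbc ih => exact W_closed D htc v ih hbc

end Aux

/-- In a normal-form hypertree decomposition, for any vertex `v` and
`W = treecomp(v) − χ(v)`: any `[χ(v)]`-component meeting `W` is contained in `W`;
consequently, the `[χ(v)]`-components contained in `treecomp(v)` partition `W`. -/
theorem stmt_8 {V A P : Type} (Q : CQ V A) (T : RTree P) (D : HTD Q T)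
    (hnf : D.NF) (tc : P → Set V) (htc : D.IsTreeComp tc) (v : P) :
    (∀ C : Set V, Q.IsComp (D.χ v) C → (C ∩ (tc v \ D.χ v)).Nonempty →
        C ⊆ tc v \ D.χ v) ∧
    (∀ x ∈ tc v \ D.χ v, ∃! C : Set V, Q.IsComp (D.χ v) C ∧ C ⊆ tc v ∧ x ∈ C) := by
  have main : ∀ C : Set V, Q.IsComp (D.χ v) C → (C ∩ (tc v \ D.χ v)).Nonempty →
      C ⊆ tc v \ D.χ v := by
    intro C hC ⟨x, hxC, hxW⟩
    have hxQ : x ∈ Q.vars \ D.χ v := hC.2.1.1 hxC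
    rw [isComp_eq_compSet hC hxC]
    exact compSet_subset_W D htc v hxW hxQ.1
  refine ⟨main, ?_⟩
  intro x hx
  have hxQ : x ∈ Q.vars \ D.χ v := ⟨tc_subset_vars D htc v hx.1, hx.2⟩
  refine ⟨compSet Q (D.χ v) x, ⟨compSet_isComp hxQ,
    fun y hy => (compSet_subset_W D htc v hx hxQ.1 hy).1,
    mem_compSet_self hxQ⟩, ?_⟩
  rintro C ⟨hC, -, hxC⟩
  exact isComp_eq_compSet hC hxC
end

section
/- Let (T,χ,λ) be a normal-form hypertree decomposition of a conjunctive query Q and r a vertex of T. Then a set C equals treecomp(s) for some child s of r if and only if C is a [χ(r)]-component of Q with C ⊆ treecomp(r). -/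
lemma comp_eq_of_inter {V A : Type} (Q : CQ V A) (S C C' : Set V)
    (h : Q.IsComp S C) (h' : Q.IsComp S C') (hne : (C ∩ C').Nonempty) : C = C' := by
  obtain ⟨v, hvC, hvC'⟩ := hne
  have hconn : Q.ConnSet S (C ∪ C') := by
    constructor
    · exact Set.union_subset h.2.1.1 h'.2.1.1
    · intro x hx y hy
      have hx' : Relation.ReflTransGen (Q.adjOut S) x v := by
        rcases hx with hx | hx
        · exact h.2.1.2 x hx v hvC
        · exact h'.2.1.2 x hx v hvC'
      have hy' : Relation.ReflTransGen (Q.adjOut S) v y := by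
        rcases hy with hy | hy
        · exact h.2.1.2 v hvC y hy
        · exact h'.2.1.2 v hvC' y hy
      exact hx'.trans hy'
  have e1 := h.2.2 _ hconn Set.subset_union_left
  have e2 := h'.2.2 _ hconn Set.subset_union_right
  exact e1.symm.trans e2

lemma subtree_step_s9 {P : Type} {T : RTree P} {s r p : P}
    (h : T.child s r) (hp : T.inSubtree s p) : T.inSubtree r p := by
  obtain ⟨n, hn⟩ := hp
  exact ⟨n + 1, by rw [Function.iterate_succ_apply', hn, h.2]⟩

lemma exists_child_of_iterate {P : Type} (T : RTree P) :
    ∀ (n : ℕ) (p r : P), T.parent^[n] p = r → p ≠ r →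
      ∃ s, T.child s r ∧ T.inSubtree s p := by
  intro n
  induction n with
  | zero => intro p r h hne; exact absurd h hne
  | succ n ih =>
    intro p r h hne
    rw [Function.iterate_succ_apply'] at h
    by_cases hq : T.parent^[n] p = r
    · exact ih p r hq hne
    · refine ⟨T.parent^[n] p, ⟨?_, h⟩, ⟨n, rfl⟩⟩
      intro hroot
      apply hq
      rw [hroot, ← T.parent_root, ← hroot]
      exact h

/-- In a normal-form hypertree decomposition, `C = treecomp(s)` for some child `s` of `r`
iff `C` is a `[χ(r)]`-component of `Q` with `C ⊆ treecomp(r)`. -/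
theorem stmt_9 {V A P : Type} (Q : CQ V A) (T : RTree P) (D : HTD Q T)
    (hnf : D.NF) (tc : P → Set V) (htc : D.IsTreeComp tc) (r : P) (C : Set V) :
    (∃ s : P, T.child s r ∧ C = tc s) ↔ (Q.IsComp (D.χ r) C ∧ C ⊆ tc r) := by
  constructor
  · rintro ⟨s, hcs, rfl⟩
    have hs := htc.2 s hcs.1
    rw [hcs.2] at hs
    refine ⟨hs.1, ?_⟩
    have hsub : tc s ⊆ D.χSub s := hs.2 ▸ Set.subset_union_left
    have hsub2 : D.χSub s ⊆ D.χSub r := by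
      intro v hv
      simp only [HTD.χSub, Set.mem_iUnion, Set.mem_setOf_eq] at hv ⊢
      obtain ⟨q, hq, hv⟩ := hv
      exact ⟨q, subtree_step_s9 hcs hq, hv⟩
    by_cases hr : r = T.root
    · subst hr; rw [htc.1]
      exact fun v hv => (hs.1.2.1.1 hv).1
    · have hrr := htc.2 r hr
      intro v hv
      have h1 : v ∈ D.χSub r := hsub2 (hsub hv)
      rw [hrr.2] at h1
      have hnχ : v ∉ D.χ r := (hs.1.2.1.1 hv).2
      rcases h1 with h1 | h1
      · exact h1
      · exact absurd h1.1 hnχ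
  · rintro ⟨hC, hCsub⟩
    obtain ⟨v, hv⟩ := hC.1
    have hvars : v ∈ Q.vars := (hC.2.1.1 hv).1
    have hnχ : v ∉ D.χ r := (hC.2.1.1 hv).2
    have hχsub : v ∈ D.χSub r := by
      by_cases hr : r = T.root
      · obtain ⟨a, ha⟩ : ∃ a, v ∈ Q.var a := by
          simpa [CQ.vars] using hvars
        obtain ⟨p, hp⟩ := D.cover a
        simp only [HTD.χSub, Set.mem_iUnion, Set.mem_setOf_eq]
        obtain ⟨n, hn⟩ := T.reaches p
        exact ⟨p, ⟨n, hr ▸ hn⟩, hp ha⟩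
      · have hrr := htc.2 r hr
        rw [hrr.2]
        exact Or.inl (hCsub hv)
    simp only [HTD.χSub, Set.mem_iUnion, Set.mem_setOf_eq] at hχsub
    obtain ⟨p, ⟨n, hn⟩, hvp⟩ := hχsub
    have hpr : p ≠ r := fun h => hnχ (h ▸ hvp)
    obtain ⟨s, hcs, hin⟩ := exists_child_of_iterate T n p r hn hpr
    have hs := htc.2 s hcs.1
    rw [hcs.2] at hs
    have hvχs : v ∈ D.χSub s := by
      simp only [HTD.χSub, Set.mem_iUnion, Set.mem_setOf_eq]
      exact ⟨p, hin, hvp⟩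
    rw [hs.2] at hvχs
    have hvtc : v ∈ tc s := by
      rcases hvχs with h1 | h1
      · exact h1
      · exact absurd h1.2 hnχ
    exact ⟨s, hcs, comp_eq_of_inter Q (D.χ r) C (tc s) hC hs.1 ⟨v, hv, hvtc⟩⟩
end

section
/- Let (T,χ,λ) be a normal-form hypertree decomposition of a conjunctive query Q, s a vertex of T, and C ⊆ treecomp(s). Then C is a [χ(s)]-component of Q if and only if C is a [var(λ(s))]-component of Q. -/
/-- In a normal-form hypertree decomposition, for a vertex `s` and `C ⊆ treecomp(s)`:
`C` is a `[χ(s)]`-component of `Q` iff `C` is a `[var(λ(s))]`-component of `Q`. -/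
theorem stmt_11 {V A P : Type} (Q : CQ V A) (T : RTree P) (D : HTD Q T)
    (hnf : D.NF) (tc : P → Set V) (htc : D.IsTreeComp tc) (s : P) (C : Set V)
    (hC : C ⊆ tc s) :
    Q.IsComp (D.χ s) C ↔ Q.IsComp (Q.varSet (D.lam s)) C := by
  -- crossing lemma: an edge from inside the subtree of `s` to outside must start at `s`
  have cross : ∀ {a b : P}, T.inSubtree s a → ¬ T.inSubtree s b → T.graph.Adj a b → a = s := by
    rintro a b ⟨n, hn⟩ hb (⟨_, hab⟩ | ⟨_, hba⟩)
    · cases n with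
      | zero => exact hn
      | succ m =>
        exfalso; exact hb ⟨m, by rw [← hab, ← Function.iterate_succ_apply]; exact hn⟩
    · exfalso; exact hb ⟨n + 1, by rw [Function.iterate_succ_apply, hba]; exact hn⟩
  -- walk lemma
  have walk_cross : ∀ (Sset : Set P), (T.graph.induce Sset).Connected →
      ∀ p q : P, p ∈ Sset → q ∈ Sset → T.inSubtree s p → ¬ T.inSubtree s q → s ∈ Sset := by
    intro Sset hconn p q hp hq hps hqs
    suffices h : ∀ (u v : ↥Sset) (_ : (T.graph.induce Sset).Walk u v),
        T.inSubtree s u.1 → ¬ T.inSubtree s v.1 → s ∈ Sset by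
      obtain ⟨w⟩ := hconn.preconnected ⟨p, hp⟩ ⟨q, hq⟩
      exact h _ _ w hps hqs
    intro u v w hps hqs
    induction w with
    | nil => exact absurd hps hqs
    | @cons u u' v hadj w ih =>
      by_cases h' : T.inSubtree s u'.1
      · exact ih h' hqs
      · have := cross hps h' hadj
        rw [← this]; exact u.2
  set S2 := Q.varSet (D.lam s) with hS2
  -- basic containments
  have hS1S2 : D.χ s ⊆ S2 := D.chiSub s
  have hspec : S2 ∩ D.χSub s ⊆ D.χ s := D.special s
  have htcsub : tc s ⊆ D.χSub s := by
    by_cases hroot : s = T.root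
    · subst hroot
      rw [htc.1]
      intro v hv
      obtain ⟨a, ha⟩ := Set.mem_iUnion.mp hv
      obtain ⟨p, hp⟩ := D.cover a
      exact Set.mem_biUnion (T.reaches p) (hp ha)
    · rw [(htc.2 s hroot).2]; exact Set.subset_union_left
  have hCsub : C ⊆ D.χSub s := hC.trans htcsub
  -- step lemma
  have step : ∀ {x y : V}, x ∈ D.χSub s → x ∉ D.χ s → Q.adjOut (D.χ s) x y →
      y ∈ D.χSub s ∧ Q.adjOut S2 x y := by
    rintro x y hx hxs ⟨a, hxa, hya, -, hys⟩
    obtain ⟨p, hp⟩ := D.cover a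
    by_cases hps : T.inSubtree s p
    · have hy : y ∈ D.χSub s := Set.mem_biUnion hps (hp hya)
      refine ⟨hy, a, hxa, hya, ?_, ?_⟩
      · intro hx2; exact hxs (hspec ⟨hx2, hx⟩)
      · intro hy2; exact hys (hspec ⟨hy2, hy⟩)
    · exfalso
      obtain ⟨q, hq1, hq2⟩ := Set.mem_iUnion₂.mp hx
      have hxv : x ∈ Q.vars := Set.mem_iUnion.mpr ⟨a, hxa⟩
      exact hxs (walk_cross {p : P | x ∈ D.χ p} (D.conn x hxv) q p hq2 (hp hxa) hq1 hps)
  -- chain lemma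
  have chain : ∀ {x y : V}, x ∈ D.χSub s → x ∉ D.χ s →
      Relation.ReflTransGen (Q.adjOut (D.χ s)) x y →
      y ∈ D.χSub s ∧ y ∉ D.χ s ∧ Relation.ReflTransGen (Q.adjOut S2) x y := by
    intro x y hx hxs h
    induction h with
    | refl => exact ⟨hx, hxs, Relation.ReflTransGen.refl⟩
    | @tail z y hxz hzy ih =>
      obtain ⟨hz, hzs, hp⟩ := ih
      obtain ⟨hy, hstep⟩ := step hz hzs hzy
      obtain ⟨a, -, -, -, hys⟩ := hzy
      exact ⟨hy, hys, hp.tail hstep⟩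
  -- membership facts
  have notS2 : ∀ {x : V}, x ∈ D.χSub s → x ∉ D.χ s → x ∉ S2 := by
    intro x hx hxs hx2; exact hxs (hspec ⟨hx2, hx⟩)
  have mono : ∀ {x y : V}, Q.adjOut S2 x y → Q.adjOut (D.χ s) x y := by
    rintro x y ⟨a, h1, h2, h3, h4⟩
    exact ⟨a, h1, h2, fun h => h3 (hS1S2 h), fun h => h4 (hS1S2 h)⟩
  constructor
  · rintro ⟨hne, ⟨hsub, hconn⟩, hmax⟩
    refine ⟨hne, ⟨?_, ?_⟩, ?_⟩
    · intro x hx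
      exact ⟨(hsub hx).1, notS2 (hCsub hx) (hsub hx).2⟩
    · intro x hx y hy
      exact (chain (hCsub hx) (hsub hx).2 (hconn x hx y hy)).2.2
    · intro C' ⟨hsub', hconn'⟩ hCC'
      refine hmax C' ⟨fun x hx => ⟨(hsub' hx).1, fun h => (hsub' hx).2 (hS1S2 h)⟩, ?_⟩ hCC'
      intro x hx y hy
      exact Relation.ReflTransGen.mono (fun _ _ h => mono h) _ _ (hconn' x hx y hy)
  · rintro ⟨hne, ⟨hsub, hconn⟩, hmax⟩
    obtain ⟨c, hc⟩ := hne
    have hcsub : c ∈ D.χSub s := hCsub hc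
    have hcχ : c ∉ D.χ s := fun h => (hsub hc).2 (hS1S2 h)
    refine ⟨⟨c, hc⟩, ⟨?_, ?_⟩, ?_⟩
    · intro x hx
      exact ⟨(hsub hx).1, fun h => (hsub hx).2 (hS1S2 h)⟩
    · intro x hx y hy
      exact Relation.ReflTransGen.mono (fun _ _ h => mono h) _ _ (hconn x hx y hy)
    · intro C' ⟨hsub', hconn'⟩ hCC'
      have key : ∀ x ∈ C', x ∈ D.χSub s ∧ x ∉ D.χ s := by
        intro x hx
        have := chain hcsub hcχ (hconn' c (hCC' hc) x hx)
        exact ⟨this.1, this.2.1⟩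
      refine hmax C' ⟨?_, ?_⟩ hCC'
      · intro x hx
        exact ⟨(hsub' hx).1, notS2 (key x hx).1 (key x hx).2⟩
      · intro x hx y hy
        exact (chain (key x hx).1 (key x hx).2 (hconn' x hx y hy)).2.2
end

section
/- For every conjunctive query Q, the hypertree width of Q is at most the query width of Q: hw(Q) ≤ qw(Q). -/
section Aux

open Relation

attribute [local instance] Classical.propDecidable

variable {P : Type}

/-- Adjacency restricted to a set `S`. -/
def relOn (G : SimpleGraph P) (S : Set P) (x y : P) : Prop :=
  x ∈ S ∧ y ∈ S ∧ G.Adj x y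

lemma relOn_symm {G : SimpleGraph P} {S : Set P} {x y : P} (h : relOn G S x y) :
    relOn G S y x := ⟨h.2.1, h.1, h.2.2.symm⟩

lemma rtg_symm {G : SimpleGraph P} {S : Set P} {x y : P}
    (h : ReflTransGen (relOn G S) x y) : ReflTransGen (relOn G S) y x := by
  induction h with
  | refl => exact .refl
  | tail _ hbc ih => exact ReflTransGen.head (relOn_symm hbc) ih

lemma rtg_mono {G : SimpleGraph P} {S S' : Set P} (hss : S ⊆ S') {x y : P}
    (h : ReflTransGen (relOn G S) x y) : ReflTransGen (relOn G S') x y :=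
  ReflTransGen.mono (p := relOn G S') (fun _ _ hr => ⟨hss hr.1, hss hr.2.1, hr.2.2⟩) x y h

lemma walk_rtg {G : SimpleGraph P} {S : Set P} {a b : ↥S} (w : (G.induce S).Walk a b) :
    ReflTransGen (relOn G S) a.1 b.1 := by
  induction w with
  | nil => exact .refl
  | @cons u v w h p ih => exact ReflTransGen.head ⟨u.2, v.2, h⟩ ih

lemma rtg_reach {G : SimpleGraph P} {S : Set P} {x : P} (hx : x ∈ S) :
    ∀ {y : P}, ReflTransGen (relOn G S) x y → ∀ (hy : y ∈ S),
      (G.induce S).Reachable ⟨x, hx⟩ ⟨y, hy⟩ := by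
  intro y h
  induction h with
  | refl => intro hy; exact SimpleGraph.Reachable.refl _
  | @tail b c hab hbc ih =>
      intro hc
      exact (ih hbc.1).trans (SimpleGraph.Adj.reachable (by exact hbc.2.2))

lemma induce_connected_iff (G : SimpleGraph P) (S : Set P) :
    (G.induce S).Connected ↔ S.Nonempty ∧ ∀ x ∈ S, ∀ y ∈ S,
      ReflTransGen (relOn G S) x y := by
  constructor
  · intro h
    refine ⟨?_, ?_⟩
    · obtain ⟨⟨x, hx⟩⟩ := h.nonempty
      exact ⟨x, hx⟩
    · intro x hx y hy
      obtain ⟨w⟩ := h.preconnected ⟨x, hx⟩ ⟨y, hy⟩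
      exact walk_rtg w
  · rintro ⟨⟨x0, hx0⟩, hconn⟩
    haveI : Nonempty ↥S := ⟨⟨x0, hx0⟩⟩
    exact ⟨fun a b => rtg_reach a.2 (hconn a.1 a.2 b.1 b.2) b.2⟩

/-! Tree lemmas -/

lemma iter_root (T : RTree P) (n : ℕ) : T.parent^[n] T.root = T.root :=
  Function.iterate_fixed T.parent_root n

noncomputable def tdepth (T : RTree P) (p : P) : ℕ := Nat.find (T.reaches p)

lemma tdepth_spec (T : RTree P) (p : P) : T.parent^[tdepth T p] p = T.root :=
  Nat.find_spec (T.reaches p)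

lemma tdepth_min (T : RTree P) {p : P} {n : ℕ} (h : T.parent^[n] p = T.root) :
    tdepth T p ≤ n := Nat.find_min' (T.reaches p) h

lemma tdepth_root (T : RTree P) : tdepth T T.root = 0 :=
  Nat.le_antisymm (tdepth_min T (by simp)) (Nat.zero_le _)

lemma anc_lt (T : RTree P) {q t : P} {n : ℕ} (h : T.parent^[n] q = t) (hne : t ≠ q) :
    tdepth T t < tdepth T q := by
  have hd := tdepth_spec T q
  set d := tdepth T q with hdd
  have hd0 : d ≠ 0 := by
    intro h0
    rw [h0] at hd
    simp only [Function.iterate_zero, id_eq] at hd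
    apply hne
    rw [← h, hd, iter_root]
  have hn0 : n ≠ 0 := by
    intro h0; rw [h0] at h; exact hne h.symm
  rcases le_or_gt n d with hle | hlt
  · have hroot : T.parent^[d - n] t = T.root := by
      rw [← h, ← Function.iterate_add_apply, Nat.sub_add_cancel hle]
      exact hd
    have := tdepth_min T hroot
    omega
  · have ht : t = T.root := by
      rw [← h]
      have hn : n = (n - d) + d := by omega
      rw [hn, Function.iterate_add_apply, hd, iter_root]
    rw [ht, tdepth_root]
    omega

lemma inSubtree_refl (T : RTree P) (p : P) : T.inSubtree p p := ⟨0, rfl⟩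

lemma inSubtree_trans (T : RTree P) {p q r : P} (h1 : T.inSubtree q r)
    (h2 : T.inSubtree p q) : T.inSubtree p r := by
  obtain ⟨m, hm⟩ := h1
  obtain ⟨n, hn⟩ := h2
  exact ⟨n + m, by rw [Function.iterate_add_apply, hm, hn]⟩

lemma inSubtree_antisymm (T : RTree P) {p q : P} (h1 : T.inSubtree p q)
    (h2 : T.inSubtree q p) : p = q := by
  by_contra hne
  obtain ⟨n, hn⟩ := h1
  obtain ⟨m, hm⟩ := h2
  have l1 := anc_lt T hn hne
  have l2 := anc_lt T hm (fun h => hne h.symm)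
  omega

lemma boundary (T : RTree P) {p x y : P} (hx : T.inSubtree p x) (hxy : T.graph.Adj x y)
    (hy : ¬ T.inSubtree p y) : x = p := by
  rcases hxy with ⟨hxr, hpx⟩ | ⟨hyr, hpy⟩
  · obtain ⟨n, hn⟩ := hx
    cases n with
    | zero => exact hn
    | succ m =>
        exact absurd ⟨m, by rw [← hn, Function.iterate_succ_apply, hpx]⟩ hy
  · obtain ⟨n, hn⟩ := hx
    exact absurd ⟨n + 1, by rw [Function.iterate_succ_apply, hpy, hn]⟩ hy

lemma rtg_boundary (T : RTree P) {S : Set P} {p q r : P}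
    (h : ReflTransGen (relOn T.graph S) q r)
    (hq : T.inSubtree p q) (hr : ¬ T.inSubtree p r) : p ∈ S := by
  have key : ∀ x, ReflTransGen (relOn T.graph S) x r → T.inSubtree p x → p ∈ S := by
    intro x hx
    induction hx using ReflTransGen.head_induction_on with
    | refl => intro hh; exact absurd hh hr
    | @head a b hab hbr ih =>
        intro hpa
        by_cases hb : T.inSubtree p b
        · exact ih hb
        · have := boundary T hpa hab.2.2 hb
          exact this ▸ hab.1
  exact key q h hq

lemma chain_rtg (T : RTree P) {S : Set P} {q : P} :
    ∀ {n : ℕ}, (∀ i, i ≤ n → T.parent^[i] q ∈ S) →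
    ReflTransGen (relOn T.graph S) q (T.parent^[n] q) := by
  intro n
  induction n with
  | zero => intro _; exact .refl
  | succ m ih =>
      intro h
      have base := ih (fun i hi => h i (Nat.le_trans hi (Nat.le_succ m)))
      by_cases hr : T.parent^[m] q = T.root
      · have he : T.parent^[m + 1] q = T.parent^[m] q := by
          rw [Function.iterate_succ_apply', hr, T.parent_root]
        rw [he]; exact base
      · refine base.tail ⟨h m (Nat.le_succ m), h (m + 1) le_rfl, Or.inl ⟨hr, ?_⟩⟩
        exact (Function.iterate_succ_apply' T.parent m q).symm

lemma vertical (T : RTree P) {S : Set P}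
    (hconn : ∀ x ∈ S, ∀ y ∈ S, ReflTransGen (relOn T.graph S) x y)
    {q : P} {n : ℕ} (hq : q ∈ S) (hx : T.parent^[n] q ∈ S) :
    ∀ i, i ≤ n → T.parent^[i] q ∈ S := by
  intro i hi
  by_cases h3 : T.inSubtree (T.parent^[i] q) (T.parent^[n] q)
  · have h2 : T.inSubtree (T.parent^[n] q) (T.parent^[i] q) :=
      ⟨n - i, by rw [← Function.iterate_add_apply, Nat.sub_add_cancel hi]⟩
    have heq := inSubtree_antisymm T h3 h2
    rw [heq]
    exact hx
  · exact rtg_boundary T (hconn q hq _ hx) ⟨i, rfl⟩ h3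

end Aux

section Main

open Relation

attribute [local instance] Classical.propDecidable

variable {V A P : Type}

/-- The χ labeling induced by a query decomposition. -/
def chi0 (Q : CQ V A) {T : RTree P} (D : QDec Q T) (p : P) : Set V :=
  Q.varSet (D.la p) ∪ (D.lv p ∩ Q.vars)

lemma mem_chi0 {Q : CQ V A} {T : RTree P} {D : QDec Q T} {v : V} {p : P} :
    v ∈ chi0 Q D p ↔ (∃ a ∈ D.la p, v ∈ Q.var a) ∨ (v ∈ D.lv p ∧ v ∈ Q.vars) := by
  simp [chi0, CQ.varSet]

lemma mem_vars_of_var {Q : CQ V A} {a : A} {v : V} (h : v ∈ Q.var a) : v ∈ Q.vars :=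
  Set.mem_iUnion.mpr ⟨a, h⟩

lemma region_eq (Q : CQ V A) {T : RTree P} (D : QDec Q T) {v : V} (hv : v ∈ Q.vars) :
    {p : P | v ∈ D.lv p ∨ ∃ a ∈ D.la p, v ∈ Q.var a} = {p : P | v ∈ chi0 Q D p} := by
  ext p
  simp only [Set.mem_setOf_eq, mem_chi0]
  constructor
  · rintro (h | ⟨a, ha, h2⟩)
    · exact Or.inr ⟨h, hv⟩
    · exact Or.inl ⟨a, ha, h2⟩
  · rintro (⟨a, ha, h2⟩ | ⟨h, _⟩)
    · exact Or.inr ⟨a, ha, h2⟩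
    · exact Or.inl h

theorem qw_to_hw {V A : Type} [Finite V] [Finite A] (Q : CQ V A) {k : ℕ}
    (h : Q.qwLE k) : Q.hwLE k := by
  obtain ⟨P, T, D, hwid⟩ := h
  by_cases hA : Nonempty A
  case neg =>
    refine ⟨Unit, ⟨(), fun _ => (), rfl, fun _ => ⟨0, rfl⟩⟩,
      ⟨fun _ => ∅, fun _ => ∅, ?_, ?_, ?_, ?_⟩, ?_⟩
    · intro a; exact absurd ⟨a⟩ hA
    · intro v hv
      obtain ⟨a, -⟩ := Set.mem_iUnion.mp hv
      exact absurd ⟨a⟩ hA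
    · intro p; exact Set.empty_subset _
    · intro p; simp [CQ.varSet]
    · intro p; simp
  case pos =>
  obtain ⟨a0⟩ := hA
  haveI : Nonempty P := ⟨T.root⟩
  -- region connectivity facts
  have hreg : ∀ v ∈ Q.vars, {p : P | v ∈ chi0 Q D p}.Nonempty ∧
      ∀ x ∈ {p : P | v ∈ chi0 Q D p}, ∀ y ∈ {p : P | v ∈ chi0 Q D p},
        ReflTransGen (relOn T.graph {p : P | v ∈ chi0 Q D p}) x y := by
    intro v hv
    have hc := D.connV v hv
    rw [region_eq Q D hv] at hc
    exact (induce_connected_iff T.graph _).mp hc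
  -- choose for each variable a depth-minimal atom occurrence
  have exmin : ∀ u : V, ∃ ra : P × A, u ∈ Q.vars →
      ra.2 ∈ D.la ra.1 ∧ u ∈ Q.var ra.2 ∧
      ∀ t a', a' ∈ D.la t → u ∈ Q.var a' → tdepth T ra.1 ≤ tdepth T t := by
    intro u
    by_cases hu : u ∈ Q.vars
    · obtain ⟨a1, ha1⟩ := Set.mem_iUnion.mp hu
      obtain ⟨p1, hp1⟩ := D.coverA a1
      have hDS : {n : ℕ | ∃ t, (∃ a' ∈ D.la t, u ∈ Q.var a') ∧ tdepth T t = n}.Nonempty :=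
        ⟨tdepth T p1, p1, ⟨a1, hp1, ha1⟩, rfl⟩
      obtain ⟨t0, ⟨a2, ha2, ha2'⟩, hd⟩ := Nat.sInf_mem hDS
      refine ⟨(t0, a2), fun _ => ⟨ha2, ha2', fun t a' h1 h2 => ?_⟩⟩
      rw [hd]
      exact Nat.sInf_le ⟨t, ⟨a', h1, h2⟩, rfl⟩
    · exact ⟨(T.root, a0), fun hh => absurd hh hu⟩
  choose ra hra using exmin
  -- the chosen atom node lies in the region of every variable it contains
  have hchi_r : ∀ u ∈ Q.vars, ∀ w ∈ Q.var (ra u).2, w ∈ chi0 Q D (ra u).1 := by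
    intro u hu w hw
    exact mem_chi0.mpr (Or.inl ⟨(ra u).2, (hra u hu).1, hw⟩)
  refine ⟨P, T,
    ⟨fun p => chi0 Q D p ∪
        ⋃ u ∈ {u : V | (u ∈ D.lv p ∩ Q.vars) ∧ T.inSubtree p (ra u).1}, Q.var (ra u).2,
      fun p => D.la p ∪ (fun u => (ra u).2) '' (D.lv p ∩ Q.vars),
      ?_, ?_, ?_, ?_⟩, ?_⟩
  · -- cover
    intro a
    obtain ⟨p, hp⟩ := D.coverA a
    refine ⟨p, fun w hw => Or.inl (mem_chi0.mpr (Or.inl ⟨a, hp, hw⟩))⟩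
  · -- conn
    intro v hv
    set Sv : Set P := {p : P | v ∈ chi0 Q D p ∪
        ⋃ u ∈ {u : V | (u ∈ D.lv p ∩ Q.vars) ∧ T.inSubtree p (ra u).1}, Q.var (ra u).2}
      with hSv
    have hsub : {p : P | v ∈ chi0 Q D p} ⊆ Sv := fun p hp => Or.inl hp
    obtain ⟨hRne, hRconn⟩ := hreg v hv
    -- every vertex of Sv reaches the base region within Sv
    have hstep : ∀ x ∈ Sv, ∃ x' ∈ {p : P | v ∈ chi0 Q D p},
        ReflTransGen (relOn T.graph Sv) x x' := by
      intro x hx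
      rcases hx with hx | hx
      · exact ⟨x, hx, .refl⟩
      · simp only [Set.mem_iUnion, Set.mem_setOf_eq, exists_prop] at hx
        obtain ⟨u, ⟨⟨hulv, huvars⟩, hins⟩, hvau⟩ := hx
        obtain ⟨hra1, hra2, hra3⟩ := hra u huvars
        obtain ⟨n, hn⟩ := hins
        -- all nodes on the vertical path from (ra u).1 to x lie in the u-region
        have hqreg : (ra u).1 ∈ {p : P | u ∈ chi0 Q D p} :=
          mem_chi0.mpr (Or.inl ⟨(ra u).2, hra1, hra2⟩)
        have hxreg : T.parent^[n] (ra u).1 ∈ {p : P | u ∈ chi0 Q D p} := by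
          rw [hn]; exact mem_chi0.mpr (Or.inr ⟨hulv, huvars⟩)
        have hvert := vertical T (hreg u huvars).2 hqreg hxreg
        -- each such node is in Sv
        have hall : ∀ i, i ≤ n → T.parent^[i] (ra u).1 ∈ Sv := by
          intro i hi
          have hti := hvert i hi
          rcases mem_chi0.mp hti with ⟨a', ha', hua'⟩ | ⟨hlv, _⟩
          · -- atom node: must be (ra u).1 itself by depth minimality
            by_cases hne : T.parent^[i] (ra u).1 = (ra u).1
            · rw [hne]
              exact hsub (hchi_r u huvars v hvau)
            · have l1 := anc_lt T (rfl : T.parent^[i] (ra u).1 = T.parent^[i] (ra u).1) hne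
              have l2 := hra3 _ a' ha' hua'
              omega
          · refine Or.inr ?_
            simp only [Set.mem_iUnion, Set.mem_setOf_eq, exists_prop]
            exact ⟨u, ⟨⟨hlv, huvars⟩, ⟨i, rfl⟩⟩, hvau⟩
        have hchain := chain_rtg T hall
        rw [hn] at hchain
        refine ⟨(ra u).1, hchi_r u huvars v hvau, rtg_symm hchain⟩
    refine (induce_connected_iff T.graph Sv).mpr ⟨?_, ?_⟩
    · obtain ⟨x, hx⟩ := hRne
      exact ⟨x, hsub hx⟩
    · intro x hx y hy
      obtain ⟨x', hx', hxx⟩ := hstep x hx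
      obtain ⟨y', hy', hyy⟩ := hstep y hy
      have hmid := rtg_mono hsub (hRconn x' hx' y' hy')
      exact hxx.trans (hmid.trans (rtg_symm hyy))
  · -- chiSub
    intro p w hw
    simp only [CQ.varSet, Set.mem_iUnion, exists_prop]
    rcases hw with hw | hw
    · rcases mem_chi0.mp hw with ⟨a, ha, hwa⟩ | ⟨hlv, hvars⟩
      · exact ⟨a, Or.inl ha, hwa⟩
      · exact ⟨(ra w).2, Or.inr ⟨w, ⟨hlv, hvars⟩, rfl⟩, (hra w hvars).2.1⟩
    · simp only [Set.mem_iUnion, Set.mem_setOf_eq, exists_prop] at hw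
      obtain ⟨u, ⟨hu, _⟩, hwau⟩ := hw
      exact ⟨(ra u).2, Or.inr ⟨u, hu, rfl⟩, hwau⟩
  · -- special
    intro p w hw
    obtain ⟨hw1, hw2⟩ := hw
    simp only [CQ.varSet, Set.mem_iUnion, exists_prop] at hw1
    obtain ⟨a, ha, hwa⟩ := hw1
    simp only [Set.mem_iUnion, Set.mem_setOf_eq, exists_prop] at hw2
    obtain ⟨q, hq, hwq⟩ := hw2
    rcases ha with ha | ⟨u, hu, rfl⟩
    · exact Or.inl (mem_chi0.mpr (Or.inl ⟨a, ha, hwa⟩))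
    · have hu2 : u ∈ Q.vars := hu.2
      by_cases hrs : T.inSubtree p (ra u).1
      · refine Or.inr ?_
        simp only [Set.mem_iUnion, Set.mem_setOf_eq, exists_prop]
        exact ⟨u, ⟨hu, hrs⟩, hwa⟩
      · have hWvars : w ∈ Q.vars := mem_vars_of_var hwa
        have hRconn := (hreg w hWvars).2
        have hru_mem : (ra u).1 ∈ {p : P | w ∈ chi0 Q D p} := hchi_r u hu2 w hwa
        rcases hwq with hwq | hwq
        · have : p ∈ {p : P | w ∈ chi0 Q D p} :=
            rtg_boundary T (hRconn q hwq (ra u).1 hru_mem) hq hrs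
          exact Or.inl this
        · simp only [Set.mem_iUnion, Set.mem_setOf_eq, exists_prop] at hwq
          obtain ⟨u', ⟨hu', hins'⟩, hwu'⟩ := hwq
          have h1 : (ra u').1 ∈ {p : P | w ∈ chi0 Q D p} := hchi_r u' hu'.2 w hwu'
          have h2 : T.inSubtree p (ra u').1 := inSubtree_trans T hins' hq
          have : p ∈ {p : P | w ∈ chi0 Q D p} :=
            rtg_boundary T (hRconn (ra u').1 h1 (ra u).1 hru_mem) h2 hrs
          exact Or.inl this
  · -- width
    intro p
    obtain ⟨hfa, hfv, hcard⟩ := hwid p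
    refine ⟨Set.toFinite _, ?_⟩
    calc (D.la p ∪ (fun u => (ra u).2) '' (D.lv p ∩ Q.vars)).ncard
        ≤ (D.la p).ncard + ((fun u => (ra u).2) '' (D.lv p ∩ Q.vars)).ncard :=
          Set.ncard_union_le _ _
      _ ≤ (D.la p).ncard + (D.lv p ∩ Q.vars).ncard :=
          Nat.add_le_add_left (Set.ncard_image_le (Set.toFinite _)) _
      _ ≤ (D.la p).ncard + (D.lv p).ncard :=
          Nat.add_le_add_left
            (Set.ncard_le_ncard Set.inter_subset_left (Set.toFinite _)) _
      _ ≤ k := hcard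

end Main

/-- Trivial one-node query decomposition: the query width set is nonempty. -/
lemma qwLE_card {V A : Type} [Finite V] [Finite A] (Q : CQ V A) :
    Q.qwLE (Nat.card A) := by
  refine ⟨Unit, ⟨(), fun _ => (), rfl, fun _ => ⟨0, rfl⟩⟩,
    ⟨fun _ => Set.univ, fun _ => ∅, ?_, ?_, ?_⟩, ?_⟩
  · intro a; exact ⟨(), Set.mem_univ a⟩
  · intro a
    haveI : Nonempty ↥({p : Unit | a ∈ (Set.univ : Set A)}) := ⟨⟨(), Set.mem_univ a⟩⟩
    exact ⟨fun x y => by rw [Subsingleton.elim x y]⟩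
  · intro v hv
    obtain ⟨a, ha⟩ := Set.mem_iUnion.mp hv
    haveI : Nonempty ↥({p : Unit | v ∈ (∅ : Set V) ∨
        ∃ a ∈ (Set.univ : Set A), v ∈ Q.var a}) :=
      ⟨⟨(), Or.inr ⟨a, Set.mem_univ a, ha⟩⟩⟩
    exact ⟨fun x y => by rw [Subsingleton.elim x y]⟩
  · intro p
    refine ⟨Set.finite_univ, Set.finite_empty, ?_⟩
    simp [Set.ncard_univ]

/-- For every conjunctive query `Q`, `hw(Q) ≤ qw(Q)`. -/
theorem stmt_12 {V A : Type} [Finite V] [Finite A] (Q : CQ V A) : Q.hw ≤ Q.qw := by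
  have hne : {k : ℕ | Q.qwLE k}.Nonempty := ⟨Nat.card A, qwLE_card Q⟩
  have h1 : Q.qwLE Q.qw := Nat.sInf_mem hne
  have h2 : Q.hwLE Q.qw := qw_to_hw Q h1
  exact Nat.sInf_le h2
end

section
/- Every query decomposition of width c of a conjunctive query Q can be converted into a pure query decomposition of Q of width c on the same tree (i.e., by only changing the labeling). -/
namespace Purify
attribute [local instance] Classical.propDecidable

variable {P : Type} (T : RTree P)

lemma root_iter (n : ℕ) : T.parent^[n] T.root = T.root := by
  induction n with
  | zero => rfl
  | succ n ih => rw [Function.iterate_succ_apply, T.parent_root]; exact ih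

lemma cyc {d : ℕ} {x : P} (hd : 0 < d) (h : T.parent^[d] x = x) : x = T.root := by
  obtain ⟨n, hn⟩ := T.reaches x
  have per : ∀ m : ℕ, T.parent^[d * m] x = x := by
    intro m
    induction m with
    | zero => rfl
    | succ m ih =>
      have e : d * (m + 1) = d * m + d := by ring
      rw [e, Function.iterate_add_apply, h]; exact ih
  have e2 : T.parent^[d * n] x = T.root := by
    have hsplit : d * n = (d * n - n) + n := by
      have : n ≤ d * n := Nat.le_mul_of_pos_left n hd
      omega
    rw [hsplit, Function.iterate_add_apply, hn, root_iter]
  rw [per n] at e2; exact e2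

lemma inj_chain {q m : P} {l : ℕ} (hl : T.parent^[l] q = m)
    (hmin : ∀ l' < l, T.parent^[l'] q ≠ m) {j₁ j₂ : ℕ} (h1 : j₁ < j₂) (h2 : j₂ ≤ l) :
    T.parent^[j₁] q ≠ T.parent^[j₂] q := by
  intro he
  have e1 : T.parent^[l - (j₂ - j₁)] q = T.parent^[l - j₂] (T.parent^[j₁] q) := by
    rw [← Function.iterate_add_apply]; congr 1; omega
  have e2 : T.parent^[l] q = T.parent^[l - j₂] (T.parent^[j₂] q) := by
    rw [← Function.iterate_add_apply]; congr 1; omega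
  exact hmin (l - (j₂ - j₁)) (by omega) (by rw [e1, he, ← e2, hl])

lemma sep {S : Set P} {s : P} {x y : ↑S} (W : (T.graph.induce S).Walk x y)
    (hx : T.inSubtree s x.val) (hy : ¬ T.inSubtree s y.val) :
    s ∈ S ∧ T.parent s ∈ S := by
  induction W with
  | nil => exact absurd hx hy
  | @cons u u' z hadj W ih =>
    by_cases h1 : T.inSubtree s u'.val
    · exact ih h1 hy
    · have hA : T.graph.Adj u.val u'.val := hadj
      rcases hA with ⟨hne, hpar⟩ | ⟨hne, hpar⟩
      · obtain ⟨n, hn⟩ := hx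
        match n, hn with
        | 0, hn =>
          simp only [Function.iterate_zero_apply] at hn
          refine ⟨hn ▸ u.2, ?_⟩
          rw [← hn, hpar]; exact u'.2
        | (m+1), hn =>
          exfalso
          apply h1
          refine ⟨m, ?_⟩
          rw [← hpar, ← Function.iterate_succ_apply]; exact hn
      · exfalso; apply h1
        obtain ⟨n, hn⟩ := hx
        exact ⟨n + 1, by rw [Function.iterate_succ_apply, hpar]; exact hn⟩

lemma walkUp {S : Set P} (p : P) (n : ℕ) (h : ∀ i ≤ n, T.parent^[i] p ∈ S) :
    (T.graph.induce S).Reachable ⟨p, h 0 (Nat.zero_le _)⟩ ⟨T.parent^[n] p, h n le_rfl⟩ := by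
  induction n with
  | zero => rfl
  | succ n ih =>
    have h' : ∀ i ≤ n, T.parent^[i] p ∈ S := fun i hi => h i (hi.trans (Nat.le_succ n))
    refine (ih h').trans ?_
    by_cases hroot : T.parent^[n] p = T.root
    · have he : T.parent^[n+1] p = T.parent^[n] p := by
        rw [Function.iterate_succ_apply', hroot, T.parent_root]
      have e : (⟨T.parent^[n] p, h' n le_rfl⟩ : ↑S) = ⟨T.parent^[n+1] p, h (n+1) le_rfl⟩ :=
        Subtype.ext he.symm
      rw [e]
    · refine SimpleGraph.Adj.reachable ?_
      show T.graph.Adj _ _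
      exact Or.inl ⟨hroot, (Function.iterate_succ_apply' _ _ _).symm⟩

lemma walkUp' {S : Set P} (p : P) (n : ℕ) (h : ∀ i ≤ n, T.parent^[i] p ∈ S)
    (x y : ↑S) (hx : x.val = p) (hy : y.val = T.parent^[n] p) :
    (T.graph.induce S).Reachable x y := by
  have hr := walkUp T p n h
  have ex : x = ⟨p, h 0 (Nat.zero_le _)⟩ := Subtype.ext hx
  have ey : y = ⟨T.parent^[n] p, h n le_rfl⟩ := Subtype.ext hy
  rw [ex, ey]; exact hr

lemma mapReach {S S' : Set P} (hS : S ⊆ S') {x y : P} {hx : x ∈ S} {hy : y ∈ S}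
    (h : (T.graph.induce S).Reachable ⟨x, hx⟩ ⟨y, hy⟩) :
    (T.graph.induce S').Reachable ⟨x, hS hx⟩ ⟨y, hS hy⟩ :=
  h.map (⟨fun z => ⟨z.val, hS z.2⟩, fun {a b} hab => hab⟩ :
    T.graph.induce S →g T.graph.induce S')

end Purify

namespace Purify
attribute [local instance] Classical.propDecidable

section Main
variable {V A P : Type} (Q : CQ V A) (T : RTree P) (D : QDec Q T)

/-- `p` carries an atom containing `v`. -/
def hA (v : V) (p : P) : Prop := ∃ a ∈ D.la p, v ∈ Q.var a

/-- the set of tree nodes where `v` occurs. -/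
def Sv (v : V) : Set P := {p : P | v ∈ D.lv p ∨ ∃ a ∈ D.la p, v ∈ Q.var a}

lemma connSv {v : V} (hv : v ∈ Q.vars) : (T.graph.induce (Sv Q T D v)).Connected :=
  D.connV v hv

lemma hA_ex {v : V} (hv : v ∈ Q.vars) : ∃ p, hA Q T D v p := by
  obtain ⟨s, ⟨a, rfl⟩, ha⟩ := hv
  obtain ⟨p, hp⟩ := D.coverA a
  exact ⟨p, a, hp, ha⟩

noncomputable def qv (v : V) : P :=
  if h : ∃ p, hA Q T D v p then h.choose else T.root

lemma qv_spec {v : V} (hv : v ∈ Q.vars) : hA Q T D v (qv Q T D v) := by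
  have h := hA_ex Q T D hv
  rw [qv, dif_pos h]
  exact h.choose_spec

lemma qv_Sv {v : V} (hv : v ∈ Q.vars) : qv Q T D v ∈ Sv Q T D v :=
  Or.inr (qv_spec Q T D hv)

lemma kIdx_ex (v : V) (p : P) : ∃ n, T.inSubtree (T.parent^[n] p) (qv Q T D v) := by
  obtain ⟨n, hn⟩ := T.reaches p
  exact ⟨n, by rw [hn]; exact T.reaches _⟩

noncomputable def kIdx (v : V) (p : P) : ℕ :=
  if h : ∃ n, T.inSubtree (T.parent^[n] p) (qv Q T D v) then Nat.find h else 0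

/-- the meet of `p` and `qv v`. -/
noncomputable def mN (v : V) (p : P) : P := T.parent^[kIdx Q T D v p] p

lemma kIdx_spec (v : V) (p : P) : T.inSubtree (mN Q T D v p) (qv Q T D v) := by
  rw [mN, kIdx, dif_pos (kIdx_ex Q T D v p)]
  exact Nat.find_spec (kIdx_ex Q T D v p)

lemma kIdx_min (v : V) (p : P) {i : ℕ} (hi : i < kIdx Q T D v p) :
    ¬ T.inSubtree (T.parent^[i] p) (qv Q T D v) := by
  rw [kIdx, dif_pos (kIdx_ex Q T D v p)] at hi
  exact Nat.find_min (kIdx_ex Q T D v p) hi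

noncomputable def lIdx (v : V) (p : P) : ℕ :=
  if h : ∃ l, T.parent^[l] (qv Q T D v) = mN Q T D v p then Nat.find h else 0

lemma lIdx_ex (v : V) (p : P) : ∃ l, T.parent^[l] (qv Q T D v) = mN Q T D v p :=
  kIdx_spec Q T D v p

lemma lIdx_spec (v : V) (p : P) : T.parent^[lIdx Q T D v p] (qv Q T D v) = mN Q T D v p := by
  rw [lIdx, dif_pos (lIdx_ex Q T D v p)]
  exact Nat.find_spec (lIdx_ex Q T D v p)

lemma lIdx_min (v : V) (p : P) {l : ℕ} (hl : l < lIdx Q T D v p) :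
    T.parent^[l] (qv Q T D v) ≠ mN Q T D v p := by
  rw [lIdx, dif_pos (lIdx_ex Q T D v p)] at hl
  exact Nat.find_min (lIdx_ex Q T D v p) hl

def cond1 (v : V) (p : P) : Prop :=
  ∃ j, j ≤ kIdx Q T D v p ∧ hA Q T D v (T.parent^[j] p)

noncomputable def jIdx (v : V) (p : P) : ℕ :=
  if h : cond1 Q T D v p then Nat.find h else 0

lemma jIdx_spec {v : V} {p : P} (h : cond1 Q T D v p) :
    jIdx Q T D v p ≤ kIdx Q T D v p ∧ hA Q T D v (T.parent^[jIdx Q T D v p] p) := by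
  rw [jIdx, dif_pos h]; exact Nat.find_spec h

lemma jIdx_min {v : V} {p : P} (h : cond1 Q T D v p) {i : ℕ} (hi : i < jIdx Q T D v p) :
    ¬ hA Q T D v (T.parent^[i] p) := by
  intro hia
  have hj := (jIdx_spec Q T D h).1
  rw [jIdx, dif_pos h] at hi hj
  exact (Nat.find_min h hi) ⟨hi.le.trans hj, hia⟩

lemma tIdx_ex {v : V} (hv : v ∈ Q.vars) (p : P) :
    ∃ t, hA Q T D v (T.parent^[lIdx Q T D v p - t] (qv Q T D v)) :=
  ⟨lIdx Q T D v p, by rw [Nat.sub_self]; exact qv_spec Q T D hv⟩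

noncomputable def tIdx (v : V) (p : P) : ℕ :=
  if h : ∃ t, hA Q T D v (T.parent^[lIdx Q T D v p - t] (qv Q T D v)) then Nat.find h else 0

lemma tIdx_spec {v : V} (hv : v ∈ Q.vars) (p : P) :
    hA Q T D v (T.parent^[lIdx Q T D v p - tIdx Q T D v p] (qv Q T D v)) := by
  rw [tIdx, dif_pos (tIdx_ex Q T D hv p)]
  exact Nat.find_spec (tIdx_ex Q T D hv p)

lemma tIdx_min {v : V} (hv : v ∈ Q.vars) (p : P) {t : ℕ} (ht : t < tIdx Q T D v p) :
    ¬ hA Q T D v (T.parent^[lIdx Q T D v p - t] (qv Q T D v)) := by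
  rw [tIdx, dif_pos (tIdx_ex Q T D hv p)] at ht
  exact Nat.find_min (tIdx_ex Q T D hv p) ht

lemma tIdx_le {v : V} (hv : v ∈ Q.vars) (p : P) : tIdx Q T D v p ≤ lIdx Q T D v p := by
  rw [tIdx, dif_pos (tIdx_ex Q T D hv p)]
  exact Nat.find_le (by rw [Nat.sub_self]; exact qv_spec Q T D hv)

noncomputable def rnode (v : V) (p : P) : P :=
  if cond1 Q T D v p then T.parent^[jIdx Q T D v p] p
  else T.parent^[lIdx Q T D v p - tIdx Q T D v p] (qv Q T D v)

lemma rnode_hA {v : V} (hv : v ∈ Q.vars) (p : P) : hA Q T D v (rnode Q T D v p) := by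
  rw [rnode]
  by_cases h : cond1 Q T D v p
  · rw [if_pos h]; exact (jIdx_spec Q T D h).2
  · rw [if_neg h]; exact tIdx_spec Q T D hv p

end Main
end Purify

namespace Purify
attribute [local instance] Classical.propDecidable

section Main2
variable {V A P : Type} (Q : CQ V A) (T : RTree P) (D : QDec Q T)

lemma itsh (x : P) {a i b : ℕ} (h : a + i = b) :
    T.parent^[a] (T.parent^[i] x) = T.parent^[b] x := by
  rw [← Function.iterate_add_apply, h]

/-- characterization lemmas -/
lemma kIdx_eq {v : V} {p : P} {m : ℕ} (h1 : T.inSubtree (T.parent^[m] p) (qv Q T D v))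
    (h2 : ∀ m' < m, ¬ T.inSubtree (T.parent^[m'] p) (qv Q T D v)) :
    kIdx Q T D v p = m := by
  rw [kIdx, dif_pos (kIdx_ex Q T D v p)]
  exact (Nat.find_eq_iff _).2 ⟨h1, h2⟩

lemma lIdx_eq {v : V} {p : P} {m : ℕ} (h1 : T.parent^[m] (qv Q T D v) = mN Q T D v p)
    (h2 : ∀ m' < m, T.parent^[m'] (qv Q T D v) ≠ mN Q T D v p) :
    lIdx Q T D v p = m := by
  rw [lIdx, dif_pos (lIdx_ex Q T D v p)]
  exact (Nat.find_eq_iff _).2 ⟨h1, fun m' hm' => h2 m' hm'⟩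

lemma jIdx_eq {v : V} {p : P} {m : ℕ} (hc : cond1 Q T D v p)
    (h1 : m ≤ kIdx Q T D v p ∧ hA Q T D v (T.parent^[m] p))
    (h2 : ∀ m' < m, ¬ (m' ≤ kIdx Q T D v p ∧ hA Q T D v (T.parent^[m'] p))) :
    jIdx Q T D v p = m := by
  rw [jIdx, dif_pos hc]
  exact (Nat.find_eq_iff _).2 ⟨h1, fun m' hm' => h2 m' hm'⟩

lemma tIdx_eq {v : V} {p : P} {m : ℕ}
    (h1 : hA Q T D v (T.parent^[lIdx Q T D v p - m] (qv Q T D v)))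
    (h2 : ∀ m' < m, ¬ hA Q T D v (T.parent^[lIdx Q T D v p - m'] (qv Q T D v))) :
    tIdx Q T D v p = m := by
  rw [tIdx, dif_pos ⟨m, h1⟩]
  exact (Nat.find_eq_iff _).2 ⟨h1, fun m' hm' => h2 m' hm'⟩

lemma rnode_pos {v : V} {p : P} (h1 : cond1 Q T D v p) :
    rnode Q T D v p = T.parent^[jIdx Q T D v p] p := by rw [rnode, if_pos h1]

lemma rnode_neg {v : V} {p : P} (h2 : ¬ cond1 Q T D v p) :
    rnode Q T D v p = T.parent^[lIdx Q T D v p - tIdx Q T D v p] (qv Q T D v) := by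
  rw [rnode, if_neg h2]

/-- the chain from `p` up to the meet lies in `Sv`. -/
lemma chainP {v : V} {p : P} (hv : v ∈ Q.vars) (hp : p ∈ Sv Q T D v) :
    ∀ i ≤ kIdx Q T D v p, T.parent^[i] p ∈ Sv Q T D v := by
  intro i hi
  rcases Nat.eq_zero_or_pos i with rfl | hpos
  · exact hp
  have hconn := connSv Q T D hv
  obtain ⟨W⟩ : (T.graph.induce (Sv Q T D v)).Reachable ⟨p, hp⟩ ⟨qv Q T D v, qv_Sv Q T D hv⟩ :=
    hconn.preconnected _ _
  rcases lt_or_eq_of_le hi with hlt | heq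
  · exact (sep T W ⟨i, rfl⟩ (kIdx_min Q T D v p hlt)).1
  · have hstep := (sep T W (s := T.parent^[i-1] p) ⟨i - 1, rfl⟩
      (kIdx_min Q T D v p (by omega))).2
    have he : T.parent^[i] p = T.parent (T.parent^[i-1] p) := by
      conv_lhs => rw [show i = (i-1)+1 by omega]
      rw [Function.iterate_succ_apply']
    rwa [← he] at hstep

/-- the chain from `qv` up to the meet lies in `Sv`. -/
lemma chainQ {v : V} {p : P} (hv : v ∈ Q.vars) (hp : p ∈ Sv Q T D v) :
    ∀ j ≤ lIdx Q T D v p, T.parent^[j] (qv Q T D v) ∈ Sv Q T D v := by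
  intro j hj
  rcases lt_or_eq_of_le hj with hlt | heq
  · have hconn := connSv Q T D hv
    obtain ⟨W⟩ : (T.graph.induce (Sv Q T D v)).Reachable ⟨qv Q T D v, qv_Sv Q T D hv⟩ ⟨p, hp⟩ :=
      hconn.preconnected _ _
    refine (sep T W ⟨j, rfl⟩ ?_).1
    rintro ⟨i, hi⟩
    -- hi : T.parent^[i] p = T.parent^[j] (qv v)
    have hik : kIdx Q T D v p ≤ i := by
      by_contra hik
      exact kIdx_min Q T D v p (by omega) ⟨j, hi.symm⟩
    have e1 : T.parent^[j] (qv Q T D v) = T.parent^[i - kIdx Q T D v p] (mN Q T D v p) := by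
      rw [mN, itsh T p (by omega : (i - kIdx Q T D v p) + kIdx Q T D v p = i), hi]
    have e2 : mN Q T D v p =
        T.parent^[lIdx Q T D v p - j] (T.parent^[j] (qv Q T D v)) := by
      rw [itsh T (qv Q T D v) (by omega : (lIdx Q T D v p - j) + j = lIdx Q T D v p)]
      exact (lIdx_spec Q T D v p).symm
    have hcyc : T.parent^[(lIdx Q T D v p - j) + (i - kIdx Q T D v p)] (mN Q T D v p)
        = mN Q T D v p := by
      rw [Function.iterate_add_apply, ← e1, ← e2]
    have hroot : mN Q T D v p = T.root := cyc T (by omega) hcyc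
    have : T.parent^[j] (qv Q T D v) = mN Q T D v p := by
      rw [e1, hroot, root_iter]
    exact lIdx_min Q T D v p hlt this
  · rw [heq, lIdx_spec Q T D v p, mN]
    exact chainP Q T D hv hp _ le_rfl

/-- shift of the meet index along the chain from `p`. -/
lemma kIdx_shift {v : V} {p : P} {i : ℕ} (hi : i ≤ kIdx Q T D v p) :
    kIdx Q T D v (T.parent^[i] p) = kIdx Q T D v p - i := by
  refine kIdx_eq Q T D ?_ ?_
  · rw [itsh T p (by omega : (kIdx Q T D v p - i) + i = kIdx Q T D v p)]
    exact kIdx_spec Q T D v p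
  · intro m' hm'
    rw [itsh T p (rfl : m' + i = m' + i)]
    exact kIdx_min Q T D v p (by omega)

lemma mN_shift {v : V} {p : P} {i : ℕ} (hi : i ≤ kIdx Q T D v p) :
    mN Q T D v (T.parent^[i] p) = mN Q T D v p := by
  rw [mN, kIdx_shift Q T D hi, itsh T p (by omega : (kIdx Q T D v p - i) + i = kIdx Q T D v p), mN]

lemma lIdx_congr {v : V} {p p' : P} (h : mN Q T D v p' = mN Q T D v p) :
    lIdx Q T D v p' = lIdx Q T D v p := by
  rw [lIdx, lIdx, h]

lemma tIdx_congr {v : V} {p p' : P} (hl : lIdx Q T D v p' = lIdx Q T D v p) :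
    tIdx Q T D v p' = tIdx Q T D v p := by
  rw [tIdx, tIdx, hl]

lemma cond1_noAtom {v : V} {p : P} (h2 : ¬ cond1 Q T D v p) :
    ∀ j ≤ kIdx Q T D v p, ¬ hA Q T D v (T.parent^[j] p) :=
  fun j hj ha => h2 ⟨j, hj, ha⟩

/-- blob lemma, case 1 -/
lemma blob1 {v : V} {p : P} (hv : v ∈ Q.vars) (hp : p ∈ Sv Q T D v)
    (h1 : cond1 Q T D v p) {i : ℕ} (hi : i < jIdx Q T D v p) :
    v ∈ D.lv (T.parent^[i] p) ∧ rnode Q T D v (T.parent^[i] p) = rnode Q T D v p := by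
  have hjk := (jIdx_spec Q T D h1).1
  have hik : i ≤ kIdx Q T D v p := by omega
  have hSv := chainP Q T D hv hp i hik
  have hnA := jIdx_min Q T D h1 hi
  constructor
  · rcases hSv with h | h
    · exact h
    · exact absurd h hnA
  · have hk' := kIdx_shift Q T D hik
    have hc' : cond1 Q T D v (T.parent^[i] p) := by
      refine ⟨jIdx Q T D v p - i, by omega, ?_⟩
      rw [itsh T p (by omega : (jIdx Q T D v p - i) + i = jIdx Q T D v p)]
      exact (jIdx_spec Q T D h1).2
    have hj' : jIdx Q T D v (T.parent^[i] p) = jIdx Q T D v p - i := by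
      refine jIdx_eq Q T D hc' ⟨by omega, ?_⟩ ?_
      · rw [itsh T p (by omega : (jIdx Q T D v p - i) + i = jIdx Q T D v p)]
        exact (jIdx_spec Q T D h1).2
      · rintro m' hm' ⟨-, ha⟩
        rw [itsh T p (rfl : m' + i = m' + i)] at ha
        exact jIdx_min Q T D h1 (by omega) ha
    rw [rnode_pos Q T D hc', rnode_pos Q T D h1, hj',
      itsh T p (by omega : (jIdx Q T D v p - i) + i = jIdx Q T D v p)]

/-- blob lemma, case 2, nodes on the chain from `p` -/
lemma blob2A {v : V} {p : P} (hv : v ∈ Q.vars) (hp : p ∈ Sv Q T D v)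
    (h2 : ¬ cond1 Q T D v p) {i : ℕ} (hi : i ≤ kIdx Q T D v p) :
    v ∈ D.lv (T.parent^[i] p) ∧ rnode Q T D v (T.parent^[i] p) = rnode Q T D v p := by
  have hSv := chainP Q T D hv hp i hi
  have hnA := cond1_noAtom Q T D h2 i hi
  constructor
  · rcases hSv with h | h
    · exact h
    · exact absurd h hnA
  · have hk' := kIdx_shift Q T D hi
    have hm' := mN_shift Q T D hi
    have hc2' : ¬ cond1 Q T D v (T.parent^[i] p) := by
      rintro ⟨j, hj, ha⟩
      rw [hk'] at hj
      rw [itsh T p (rfl : j + i = j + i)] at ha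
      exact cond1_noAtom Q T D h2 (j + i) (by omega) ha
    have hl' := lIdx_congr Q T D hm'
    have ht' := tIdx_congr Q T D hl'
    rw [rnode_neg Q T D hc2', rnode_neg Q T D h2, hl', ht']

/-- blob lemma, case 2, nodes on the chain from `qv` -/
lemma blob2B {v : V} {p : P} (hv : v ∈ Q.vars) (hp : p ∈ Sv Q T D v)
    (h2 : ¬ cond1 Q T D v p) {j : ℕ}
    (hjl : lIdx Q T D v p - tIdx Q T D v p < j) (hjr : j < lIdx Q T D v p) :
    v ∈ D.lv (T.parent^[j] (qv Q T D v)) ∧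
      rnode Q T D v (T.parent^[j] (qv Q T D v)) = rnode Q T D v p := by
  have htl := tIdx_le Q T D hv p
  have hSv := chainQ Q T D hv hp j hjr.le
  have hnAq : ¬ hA Q T D v (T.parent^[j] (qv Q T D v)) := by
    have := tIdx_min Q T D hv p
      (t := lIdx Q T D v p - j) (by omega)
    rwa [show lIdx Q T D v p - (lIdx Q T D v p - j) = j by omega] at this
  constructor
  · rcases hSv with h | h
    · exact h
    · exact absurd h hnAq
  · have hk0 : kIdx Q T D v (T.parent^[j] (qv Q T D v)) = 0 := by
      refine kIdx_eq Q T D ?_ (by omega)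
      rw [Function.iterate_zero_apply]
      exact ⟨j, rfl⟩
    have hm0 : mN Q T D v (T.parent^[j] (qv Q T D v)) = T.parent^[j] (qv Q T D v) := by
      rw [mN, hk0, Function.iterate_zero_apply]
    have hl' : lIdx Q T D v (T.parent^[j] (qv Q T D v)) = j := by
      refine lIdx_eq Q T D (by rw [hm0]) ?_
      intro l' hl'
      rw [hm0]
      exact inj_chain T (lIdx_spec Q T D v p) (fun l'' hl'' => lIdx_min Q T D v p hl'') hl' hjr.le
    have hc' : ¬ cond1 Q T D v (T.parent^[j] (qv Q T D v)) := by
      rintro ⟨jj, hjj, ha⟩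
      rw [hk0, Nat.le_zero] at hjj
      rw [hjj, Function.iterate_zero_apply] at ha
      exact hnAq ha
    have ht' : tIdx Q T D v (T.parent^[j] (qv Q T D v)) =
        j - (lIdx Q T D v p - tIdx Q T D v p) := by
      refine tIdx_eq Q T D ?_ ?_
      · rw [hl', show j - (j - (lIdx Q T D v p - tIdx Q T D v p)) =
          lIdx Q T D v p - tIdx Q T D v p by omega]
        exact tIdx_spec Q T D hv p
      · intro t ht
        rw [hl']
        have := tIdx_min Q T D hv p (t := lIdx Q T D v p - (j - t)) (by omega)
        rwa [show lIdx Q T D v p - (lIdx Q T D v p - (j - t)) = j - t by omega] at this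
    rw [rnode_neg Q T D hc', rnode_neg Q T D h2, hl', ht',
      show j - (j - (lIdx Q T D v p - tIdx Q T D v p)) = lIdx Q T D v p - tIdx Q T D v p
        by omega]

end Main2
end Purify

namespace Purify
attribute [local instance] Classical.propDecidable

section Main3
variable {V A P : Type} (Q : CQ V A) (T : RTree P) (D : QDec Q T)

lemma reach_rnode {v : V} {p : P} (hv : v ∈ Q.vars) (hp : v ∈ D.lv p) {S : Set P}
    (hr : rnode Q T D v p ∈ S)
    (hb : ∀ p', v ∈ D.lv p' → rnode Q T D v p' = rnode Q T D v p → p' ∈ S) :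
    (T.graph.induce S).Reachable ⟨p, hb p hp rfl⟩ ⟨rnode Q T D v p, hr⟩ := by
  have hpSv : p ∈ Sv Q T D v := Or.inl hp
  by_cases h1 : cond1 Q T D v p
  · have memb : ∀ i ≤ jIdx Q T D v p, T.parent^[i] p ∈ S := by
      intro i hi
      rcases lt_or_eq_of_le hi with hlt | heq
      · obtain ⟨hl, hr'⟩ := blob1 Q T D hv hpSv h1 hlt
        exact hb _ hl hr'
      · rw [heq, ← rnode_pos Q T D h1]; exact hr
    exact walkUp' T p (jIdx Q T D v p) memb _ _ rfl (rnode_pos Q T D h1)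
  · have membP : ∀ i ≤ kIdx Q T D v p, T.parent^[i] p ∈ S := by
      intro i hi
      obtain ⟨hl, hr'⟩ := blob2A Q T D hv hpSv h1 hi
      exact hb _ hl hr'
    have hmS : mN Q T D v p ∈ S := membP _ le_rfl
    have R1 : (T.graph.induce S).Reachable ⟨p, hb p hp rfl⟩ ⟨mN Q T D v p, hmS⟩ :=
      walkUp' T p (kIdx Q T D v p) membP _ _ rfl rfl
    have htl := tIdx_le Q T D hv p
    have hrn := rnode_neg Q T D h1
    have hmix : ∀ t, t + (lIdx Q T D v p - tIdx Q T D v p) = lIdx Q T D v p →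
        T.parent^[t] (rnode Q T D v p) = mN Q T D v p := by
      intro t htt
      rw [hrn, itsh T (qv Q T D v) htt]
      exact lIdx_spec Q T D v p
    have memb2 : ∀ t ≤ tIdx Q T D v p, T.parent^[t] (rnode Q T D v p) ∈ S := by
      intro t ht
      rcases Nat.eq_zero_or_pos t with rfl | hpos
      · rw [Function.iterate_zero_apply]; exact hr
      rcases lt_or_eq_of_le ht with hlt | heq
      · have he : T.parent^[t] (rnode Q T D v p) =
            T.parent^[t + (lIdx Q T D v p - tIdx Q T D v p)] (qv Q T D v) := by
          rw [hrn]
          exact itsh T (qv Q T D v) rfl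
        rw [he]
        obtain ⟨hl, hr'⟩ := blob2B Q T D hv hpSv h1
          (j := t + (lIdx Q T D v p - tIdx Q T D v p)) (by omega) (by omega)
        exact hb _ hl hr'
      · rw [heq, hmix (tIdx Q T D v p) (by omega)]
        exact hmS
    have R2 : (T.graph.induce S).Reachable ⟨rnode Q T D v p, hr⟩ ⟨mN Q T D v p, hmS⟩ :=
      walkUp' T (rnode Q T D v p) (tIdx Q T D v p) memb2 _ _ rfl
        (hmix (tIdx Q T D v p) (by omega)).symm
    exact R1.trans R2.symm

variable [Nonempty A]

noncomputable def g (v : V) (r : P) : A :=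
  if h : hA Q T D v r then h.choose else Classical.arbitrary A

lemma g_spec {v : V} {r : P} (h : hA Q T D v r) :
    g Q T D v r ∈ D.la r ∧ v ∈ Q.var (g Q T D v r) := by
  rw [g, dif_pos h]
  exact h.choose_spec

noncomputable def la' (p : P) : Set A :=
  D.la p ∪ (fun v => g Q T D v (rnode Q T D v p)) '' {v | v ∈ D.lv p ∧ v ∈ Q.vars}

lemma la'_cases {p : P} {a : A} (h : a ∈ la' Q T D p) :
    a ∈ D.la p ∨ ∃ v, (v ∈ D.lv p ∧ v ∈ Q.vars) ∧ g Q T D v (rnode Q T D v p) = a := h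

lemma connA' (a : A) : (T.graph.induce {p : P | a ∈ la' Q T D p}).Connected := by
  set N := {p : P | a ∈ la' Q T D p} with hN
  obtain ⟨p₀, hp₀⟩ := D.coverA a
  have hp₀N : p₀ ∈ N := Or.inl hp₀
  have hsub : {p : P | a ∈ D.la p} ⊆ N := fun q hq => Or.inl hq
  have key : ∀ x : ↑N, (T.graph.induce N).Reachable x ⟨p₀, hp₀N⟩ := by
    rintro ⟨x, hx⟩
    rcases la'_cases Q T D hx with hx1 | ⟨v, ⟨hvl, hvv⟩, hg⟩
    · exact mapReach T hsub ((D.connA a).preconnected ⟨x, hx1⟩ ⟨p₀, hp₀⟩)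
    · have hgs := g_spec Q T D (rnode_hA Q T D hvv x)
      have hrla : a ∈ D.la (rnode Q T D v x) := hg ▸ hgs.1
      have hrN : rnode Q T D v x ∈ N := Or.inl hrla
      have hb : ∀ p', v ∈ D.lv p' → rnode Q T D v p' = rnode Q T D v x → p' ∈ N :=
        fun p' h1 h2 => Or.inr ⟨v, ⟨h1, hvv⟩, by show g Q T D v (rnode Q T D v p') = a; rw [h2, hg]⟩
      refine (reach_rnode Q T D hvv hvl hrN hb).trans ?_
      exact mapReach T hsub ((D.connA a).preconnected ⟨rnode Q T D v x, hrla⟩ ⟨p₀, hp₀⟩)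
  haveI : Nonempty ↑N := ⟨⟨p₀, hp₀N⟩⟩
  exact ⟨fun x y => (key x).trans (key y).symm⟩

lemma connV' (v₀ : V) (hv₀ : v₀ ∈ Q.vars) :
    (T.graph.induce {p : P | ∃ a ∈ la' Q T D p, v₀ ∈ Q.var a}).Connected := by
  set N := {p : P | ∃ a ∈ la' Q T D p, v₀ ∈ Q.var a} with hN
  have hsub : Sv Q T D v₀ ⊆ N := by
    rintro q (hlv | ⟨a, hal, hav⟩)
    · exact ⟨g Q T D v₀ (rnode Q T D v₀ q), Or.inr ⟨v₀, ⟨hlv, hv₀⟩, rfl⟩,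
        (g_spec Q T D (rnode_hA Q T D hv₀ q)).2⟩
    · exact ⟨a, Or.inl hal, hav⟩
  have hhub : qv Q T D v₀ ∈ N := hsub (qv_Sv Q T D hv₀)
  have key : ∀ x : ↑N, (T.graph.induce N).Reachable x ⟨qv Q T D v₀, hhub⟩ := by
    rintro ⟨x, hx⟩
    obtain ⟨a, ha', hva⟩ := hx
    rcases la'_cases Q T D ha' with hx1 | ⟨v, ⟨hvl, hvv⟩, hg⟩
    · have hxS : x ∈ Sv Q T D v₀ := Or.inr ⟨a, hx1, hva⟩
      exact mapReach T hsub ((connSv Q T D hv₀).preconnected ⟨x, hxS⟩ ⟨_, qv_Sv Q T D hv₀⟩)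
    · have hgs := g_spec Q T D (rnode_hA Q T D hvv x)
      have hrS : rnode Q T D v x ∈ Sv Q T D v₀ := Or.inr ⟨a, hg ▸ hgs.1, hva⟩
      have hrN : rnode Q T D v x ∈ N := hsub hrS
      have hb : ∀ p', v ∈ D.lv p' → rnode Q T D v p' = rnode Q T D v x → p' ∈ N :=
        fun p' h1 h2 => ⟨a, Or.inr ⟨v, ⟨h1, hvv⟩, by show g Q T D v (rnode Q T D v p') = a; rw [h2, hg]⟩, hva⟩
      refine (reach_rnode Q T D hvv hvl hrN hb).trans ?_
      exact mapReach T hsub ((connSv Q T D hv₀).preconnected ⟨_, hrS⟩ ⟨_, qv_Sv Q T D hv₀⟩)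
  haveI : Nonempty ↑N := ⟨⟨_, hhub⟩⟩
  exact ⟨fun x y => (key x).trans (key y).symm⟩

end Main3
end Purify

/-- Every query decomposition of width `c` of `Q` can be converted into a pure query
decomposition of `Q` of width `c` on the same tree. -/
theorem stmt_14 {V A P : Type} (Q : CQ V A) (T : RTree P) (D : QDec Q T) (c : ℕ)
    (hw : D.widthLE c) :
    ∃ D' : QDec Q T, D'.pure ∧ D'.widthLE c := by
  classical
  by_cases hA : Nonempty A
  · -- main construction
    refine ⟨⟨Purify.la' Q T D, fun _ => ∅, fun a => ?_, Purify.connA' Q T D, ?_⟩, ?_, ?_⟩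
    · obtain ⟨p, hp⟩ := D.coverA a
      exact ⟨p, Or.inl hp⟩
    · intro v hv
      have hset : {p : P | v ∈ (∅ : Set V) ∨ ∃ a ∈ Purify.la' Q T D p, v ∈ Q.var a} =
          {p : P | ∃ a ∈ Purify.la' Q T D p, v ∈ Q.var a} := by
        ext q; simp
      show (T.graph.induce {p : P | v ∈ (∅ : Set V) ∨ ∃ a ∈ Purify.la' Q T D p, v ∈ Q.var a}).Connected
      rw [hset]
      exact Purify.connV' Q T D v hv
    · intro p; rfl
    · intro p
      obtain ⟨hfa, hfv, hc⟩ := hw p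
      have hsub : {v | v ∈ D.lv p ∧ v ∈ Q.vars} ⊆ D.lv p := fun v hv => hv.1
      have hfin1 : ((fun v => Purify.g Q T D v (Purify.rnode Q T D v p)) ''
          {v | v ∈ D.lv p ∧ v ∈ Q.vars}).Finite := ((hfv.subset hsub).image _)
      refine ⟨hfa.union hfin1, Set.finite_empty, ?_⟩
      rw [Set.ncard_empty, Nat.add_zero]
      calc (Purify.la' Q T D p).ncard
        ≤ (D.la p).ncard + ((fun v => Purify.g Q T D v (Purify.rnode Q T D v p)) ''
            {v | v ∈ D.lv p ∧ v ∈ Q.vars}).ncard := Set.ncard_union_le _ _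
        _ ≤ (D.la p).ncard + {v | v ∈ D.lv p ∧ v ∈ Q.vars}.ncard := by
            gcongr
            exact Set.ncard_image_le (hfv.subset hsub)
        _ ≤ (D.la p).ncard + (D.lv p).ncard :=
            Nat.add_le_add_left (Set.ncard_le_ncard hsub hfv) _
        _ ≤ c := hc
  · -- A empty
    have hvars : Q.vars = ∅ := by
      ext v
      simp only [CQ.vars, Set.mem_iUnion, Set.mem_empty_iff_false, iff_false]
      rintro ⟨a, -⟩
      exact hA ⟨a⟩
    refine ⟨⟨fun _ => ∅, fun _ => ∅, fun a => absurd ⟨a⟩ hA, fun a => absurd ⟨a⟩ hA, ?_⟩,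
      fun p => rfl, fun p => ⟨Set.finite_empty, Set.finite_empty, by simp⟩⟩
    intro v hv
    rw [hvars] at hv
    exact absurd hv (Set.notMem_empty v)
end
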